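/- arXiv:2511.23443 — 7 statements merged into one kernel-verified Lean document; each statement's English description precedes it below -/
import Mathlib

section
/- For every pair of integers m ≥ 2 and p ≥ 2, there exist matrices W ∈ ℝ^{2×p} and V ∈ ℝ^{p×2} such that the two-layer sine network s(x) = V·sin(Wx) exactly realizes modular addition on X_m: for every x ∈ X_m, the score s_{y(x)}(x) is strictly greater than s_k(x) for every k ≠ y(x) (so the unique-argmax predictor outputs y(x)); moreover one can take s_q(x) = cos((2π/p)(y(x) − q)) for all q, so the margin min_x ( s_{y(x)}(x) − max_{q ≠ y(x)} s_q(x) ) equals 1 − cos(2π/p) ≥ 8/p². -/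
/-- Score of a two-layer sine network on a bag-of-tokens input. -/
noncomputable def sineScore {p d : ℕ} (W : Fin d → Fin p → ℝ) (V : Fin p → Fin d → ℝ)
    (x : Fin p → ℕ) (q : Fin p) : ℝ :=
  ∑ j, V q j * Real.sin (∑ r, W j r * (x r : ℝ))

/-- Label of a bag-of-tokens vector: (∑ r, r · x_r) mod p. -/
def lab (p : ℕ) (x : Fin p → ℕ) : ℕ := (∑ r : Fin p, (r : ℕ) * x r) % p

open Real in
/-- If `θ = 2π/p` with `p ≥ 2`, then for `θ ≤ t ≤ 2π − θ`, `cos t ≤ cos θ`. -/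
lemma cos_le_cos_aux {θ t : ℝ} (hθ0 : 0 ≤ θ) (hθπ : θ ≤ π) (h1 : θ ≤ t)
    (h2 : t ≤ 2 * π - θ) : Real.cos t ≤ Real.cos θ := by
  rcases le_or_gt t π with h | h
  · exact Real.cos_le_cos_of_nonneg_of_le_pi hθ0 h h1
  · rw [← Real.cos_two_pi_sub]
    exact Real.cos_le_cos_of_nonneg_of_le_pi hθ0 (by linarith) (by linarith)

theorem sine_low_width_construction (m p : ℕ) (hm : 2 ≤ m) (hp : 2 ≤ p) :
    ∃ (W : Fin 2 → Fin p → ℝ) (V : Fin p → Fin 2 → ℝ),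
      (∀ x : Fin p → ℕ, (∑ r, x r) = m →
        (∀ q : Fin p, sineScore W V x q =
            Real.cos (2 * Real.pi / p * ((lab p x : ℝ) - ((q : ℕ) : ℝ)))) ∧
        ∃ ℓ : Fin p, (ℓ : ℕ) = lab p x ∧
          (∀ k : Fin p, k ≠ ℓ → sineScore W V x k < sineScore W V x ℓ) ∧
          (∀ k : Fin p, k ≠ ℓ →
            1 - Real.cos (2 * Real.pi / p) ≤ sineScore W V x ℓ - sineScore W V x k)) ∧
      8 / (p : ℝ) ^ 2 ≤ 1 - Real.cos (2 * Real.pi / p) := by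
  have hp0 : (0:ℝ) < p := by positivity
  have hm0 : (0:ℝ) < m := by positivity
  have hπ := Real.pi_pos
  set θ : ℝ := 2 * Real.pi / p with hθdef
  have hθ0 : 0 < θ := by positivity
  have hθπ : θ ≤ Real.pi := by
    rw [hθdef, div_le_iff₀ hp0]
    nlinarith [mul_le_mul_of_nonneg_left (show (2:ℝ) ≤ p by exact_mod_cast hp) Real.pi_pos.le]
  -- the final margin bound
  have hbound : 8 / (p : ℝ) ^ 2 ≤ 1 - Real.cos θ := by
    have hid : Real.sin (θ/2) ^ 2 = 1/2 - Real.cos θ / 2 := by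
      have := Real.sin_sq_eq_half_sub (θ/2)
      rwa [show 2 * (θ/2) = θ by ring] at this
    have hhalf : θ/2 = Real.pi / p := by rw [hθdef]; ring
    have hle : θ/2 ≤ Real.pi / 2 := by
      rw [hhalf, div_le_div_iff₀ hp0 (by norm_num)]
      nlinarith [mul_le_mul_of_nonneg_left (show (2:ℝ) ≤ p by exact_mod_cast hp) Real.pi_pos.le]
    have hJ : 2 / Real.pi * (θ/2) ≤ Real.sin (θ/2) :=
      Real.mul_le_sin (by positivity) hle
    have hval : 2 / Real.pi * (θ/2) = 2 / p := by
      rw [hhalf]; field_simp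
    rw [hval] at hJ
    have h2p : (0:ℝ) ≤ 2 / p := by positivity
    have hsq : (2 / (p:ℝ))^2 ≤ Real.sin (θ/2)^2 := by nlinarith
    have h4 : (2 / (p:ℝ))^2 = 4 / (p:ℝ)^2 := by
      rw [div_pow]; norm_num
    have h5 : 4 / (p:ℝ)^2 ≤ Real.sin (θ/2)^2 := h4 ▸ hsq
    have hp2 : (0:ℝ) < (p:ℝ)^2 := by positivity
    have h5' : 4 ≤ Real.sin (θ/2)^2 * (p:ℝ)^2 := by
      rwa [div_le_iff₀ hp2] at h5
    have hcs : 1 - Real.cos θ = 2 * Real.sin (θ/2)^2 := by linarith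
    rw [hcs, div_le_iff₀ hp2]
    linarith
  refine ⟨![fun r => θ * r, fun r => θ * r + Real.pi / (2 * m)],
    fun q => ![Real.sin (θ * q), Real.cos (θ * q)], ?_, hbound⟩
  intro x hx
  -- compute the scores
  have hscore : ∀ q : Fin p, sineScore
      ![fun r => θ * r, fun r => θ * r + Real.pi / (2 * m)]
      (fun q => ![Real.sin (θ * q), Real.cos (θ * q)]) x q
      = Real.cos (θ * ((lab p x : ℝ) - (q : ℕ))) := by
    intro q
    set n : ℕ := ∑ r : Fin p, (r : ℕ) * x r with hn
    have hS0 : (∑ r : Fin p, θ * (r : ℕ) * (x r : ℝ)) = θ * n := by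
      rw [hn, Nat.cast_sum, Finset.mul_sum]
      apply Finset.sum_congr rfl
      intro r _
      push_cast
      ring
    have hS1 : (∑ r : Fin p, (θ * (r : ℕ) + Real.pi / (2 * m)) * (x r : ℝ))
        = θ * n + Real.pi / 2 := by
      have hxm : (∑ r : Fin p, (x r : ℝ)) = m := by
        rw [← Nat.cast_sum]; exact_mod_cast congrArg (Nat.cast : ℕ → ℝ) hx
      rw [show (∑ r : Fin p, (θ * (r : ℕ) + Real.pi / (2 * m)) * (x r : ℝ))
          = (∑ r : Fin p, θ * (r : ℕ) * (x r : ℝ))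
            + Real.pi / (2 * m) * (∑ r : Fin p, (x r : ℝ)) by
        rw [Finset.mul_sum, ← Finset.sum_add_distrib]
        apply Finset.sum_congr rfl; intro r _; ring]
      rw [hS0, hxm]
      field_simp
    simp only [sineScore, Fin.sum_univ_two, Matrix.cons_val_zero, Matrix.cons_val_one,
      Matrix.head_cons]
    rw [hS0, hS1, Real.sin_add_pi_div_two]
    have hcos : Real.sin (θ * q) * Real.sin (θ * n) + Real.cos (θ * q) * Real.cos (θ * n)
        = Real.cos (θ * n - θ * q) := by
      rw [Real.cos_sub]; ring
    rw [hcos]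
    -- now reduce n mod p inside cos
    have hnl : n = p * (n / p) + lab p x := by
      rw [lab, ← hn]; exact (Nat.div_add_mod n p).symm
    have : θ * n - θ * q = θ * ((lab p x : ℝ) - (q : ℕ)) + (n / p : ℕ) * (2 * Real.pi) := by
      have : (n : ℝ) = p * (n / p : ℕ) + lab p x := by exact_mod_cast congrArg (Nat.cast : ℕ → ℝ) hnl
      rw [this, hθdef]
      field_simp
      ring
    rw [this]
    exact_mod_cast Real.cos_add_int_mul_two_pi _ (n / p : ℕ)
  have hlabp : lab p x < p := Nat.mod_lt _ (by omega)
  refine ⟨?_, ?_⟩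
  · intro q; rw [hscore q, hθdef]
  · refine ⟨⟨lab p x, hlabp⟩, rfl, ?_⟩
    have hmargin : ∀ k : Fin p, k ≠ ⟨lab p x, hlabp⟩ →
        1 - Real.cos θ ≤ sineScore ![fun r => θ * r, fun r => θ * r + Real.pi / (2 * m)]
            (fun q => ![Real.sin (θ * q), Real.cos (θ * q)]) x ⟨lab p x, hlabp⟩
          - sineScore ![fun r => θ * r, fun r => θ * r + Real.pi / (2 * m)]
            (fun q => ![Real.sin (θ * q), Real.cos (θ * q)]) x k := by
      intro k hk
      rw [hscore, hscore]
      simp only [Fin.val_mk, sub_self, mul_zero, Real.cos_zero]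
      have hne : (k : ℕ) ≠ lab p x := by
        intro h; apply hk; exact Fin.ext h
      have hcle : Real.cos (θ * ((lab p x : ℝ) - (k : ℕ))) ≤ Real.cos θ := by
        rcases lt_or_gt_of_ne hne with h | h
        · -- k < lab : lab - k ∈ [1, p-1]
          have h1 : (1:ℝ) ≤ (lab p x : ℝ) - (k : ℕ) := by
            have : (k:ℕ) + 1 ≤ lab p x := h
            have := (Nat.cast_le (α := ℝ)).2 this
            push_cast at this ⊢; linarith
          have h2 : (lab p x : ℝ) - (k : ℕ) ≤ p - 1 := by
            have : lab p x ≤ p - 1 := by omega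
            have := (Nat.cast_le (α := ℝ)).2 this
            have hc : ((p - 1 : ℕ) : ℝ) = (p:ℝ) - 1 := by
              have : 1 ≤ p := by omega
              push_cast [this]; ring
            rw [hc] at this
            have hk0 : (0:ℝ) ≤ (k:ℕ) := by positivity
            linarith
          apply cos_le_cos_aux hθ0.le hθπ
          · linarith [mul_le_mul_of_nonneg_left h1 hθ0.le]
          · have hθp : θ * p = 2 * Real.pi := by rw [hθdef]; field_simp
            have := mul_le_mul_of_nonneg_left h2 hθ0.le
            nlinarith [this, hθp]
        · -- k > lab : use evenness of cos
          rw [show θ * ((lab p x : ℝ) - (k : ℕ)) = -(θ * ((k : ℝ) - (lab p x : ℕ))) by push_cast; ring,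
            Real.cos_neg]
          have h1 : (1:ℝ) ≤ (k : ℕ) - (lab p x : ℝ) := by
            have : lab p x + 1 ≤ (k:ℕ) := h
            have := (Nat.cast_le (α := ℝ)).2 this
            push_cast at this ⊢; linarith
          have h2 : (k : ℕ) - (lab p x : ℝ) ≤ p - 1 := by
            have : (k:ℕ) ≤ p - 1 := by omega
            have := (Nat.cast_le (α := ℝ)).2 this
            have hc : ((p - 1 : ℕ) : ℝ) = (p:ℝ) - 1 := by
              have : 1 ≤ p := by omega
              push_cast [this]; ring
            rw [hc] at this
            have hl0 : (0:ℝ) ≤ (lab p x : ℕ) := by positivity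
            linarith
          apply cos_le_cos_aux hθ0.le hθπ
          · push_cast
            linarith [mul_le_mul_of_nonneg_left h1 hθ0.le]
          · have hθp : θ * p = 2 * Real.pi := by rw [hθdef]; field_simp
            have := mul_le_mul_of_nonneg_left h2 hθ0.le
            push_cast
            nlinarith [this, hθp]
      linarith
    refine ⟨?_, hmargin⟩
    intro k hk
    have := hmargin k hk
    have hpos : 0 < 1 - Real.cos θ := lt_of_lt_of_le (by positivity) hbound
    linarith
end

section
/- For every integer p ≥ 2 there exist matrices W ∈ ℝ^{2×p}, V ∈ ℝ^{p×2} and a bias vector b ∈ ℝ² such that the width-2 sine network with bias s(x) = V·sin(Wx + b) exactly realizes modular addition uniformly over all lengths: for every m ≥ 2 and every x ∈ X_m, s_{y(x)}(x) > s_k(x) for all k ≠ y(x); in fact one can take s_q(x) = cos((2π/p)(y(x) − q)) for all q ∈ [p]. -/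
/-- Score of a two-layer sine network with first-layer bias on a bag-of-tokens input. -/
noncomputable def sineScoreB {p d : ℕ} (W : Fin d → Fin p → ℝ) (V : Fin p → Fin d → ℝ)
    (b : Fin d → ℝ) (x : Fin p → ℕ) (q : Fin p) : ℝ :=
  ∑ j, V q j * Real.sin ((∑ r, W j r * (x r : ℝ)) + b j)

theorem sine_uniform_in_length_with_bias (p : ℕ) (hp : 2 ≤ p) :
    ∃ (W : Fin 2 → Fin p → ℝ) (V : Fin p → Fin 2 → ℝ) (b : Fin 2 → ℝ),
      ∀ m : ℕ, 2 ≤ m → ∀ x : Fin p → ℕ, (∑ r, x r) = m →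
        (∀ q : Fin p, sineScoreB W V b x q =
            Real.cos (2 * Real.pi / p * ((lab p x : ℝ) - ((q : ℕ) : ℝ)))) ∧
        ∃ ℓ : Fin p, (ℓ : ℕ) = lab p x ∧
          ∀ k : Fin p, k ≠ ℓ → sineScoreB W V b x k < sineScoreB W V b x ℓ := by
  have hp0 : (0:ℝ) < p := by exact_mod_cast lt_of_lt_of_le two_pos hp
  have hpne : (p:ℝ) ≠ 0 := ne_of_gt hp0
  set φ : ℝ := 2 * Real.pi / p with hφ
  have hφp : φ * p = 2 * Real.pi := by rw [hφ, div_mul_cancel₀ _ hpne]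
  refine ⟨fun _ r => φ * r, fun q => ![Real.sin (φ * q), Real.cos (φ * q)], ![0, Real.pi/2], ?_⟩
  intro m hm x hx
  have key : ∀ q : Fin p, sineScoreB (fun _ r => φ * r)
      (fun q => ![Real.sin (φ * q), Real.cos (φ * q)]) ![0, Real.pi/2] x q =
      Real.cos (φ * ((lab p x : ℝ) - (q : ℕ))) := by
    intro q
    set N : ℕ := ∑ r : Fin p, (r : ℕ) * x r with hN
    have hsum : (∑ r : Fin p, (φ * r) * (x r : ℝ)) = φ * N := by
      rw [hN, Nat.cast_sum, Finset.mul_sum]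
      refine Finset.sum_congr rfl fun r _ => ?_
      push_cast
      ring
    have hscore : sineScoreB (fun _ r => φ * r)
        (fun q => ![Real.sin (φ * q), Real.cos (φ * q)]) ![0, Real.pi/2] x q =
        Real.cos (φ * N - φ * q) := by
      simp only [sineScoreB, Fin.sum_univ_two, Matrix.cons_val_zero, Matrix.cons_val_one,
        Matrix.head_cons, hsum, add_zero]
      rw [Real.sin_add, Real.cos_pi_div_two, Real.sin_pi_div_two, Real.cos_sub]
      ring
    rw [hscore]
    have hmod : N = p * (N / p) + lab p x := (Nat.div_add_mod N p).symm
    have hNR : (N : ℝ) = p * (N / p : ℕ) + lab p x := by exact_mod_cast hmod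
    have : φ * N - φ * q = φ * ((lab p x : ℝ) - (q : ℕ)) + ((N / p : ℕ) : ℝ) * (2 * Real.pi) := by
      rw [hNR, ← hφp]
      ring
    rw [this, Real.cos_add_nat_mul_two_pi]
  refine ⟨key, ⟨lab p x, Nat.mod_lt _ (by omega)⟩, rfl, ?_⟩
  intro k hk
  rw [key, key]
  simp only [Fin.val_mk]
  have h1 : φ * ((lab p x : ℝ) - (lab p x : ℕ)) = 0 := by rw [sub_self, mul_zero]
  rw [h1, Real.cos_zero]
  refine lt_of_le_of_ne (Real.cos_le_one _) ?_
  intro hone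
  rw [Real.cos_eq_one_iff] at hone
  obtain ⟨n, hn⟩ := hone
  have hkv : (k : ℕ) ≠ lab p x := by
    intro h
    exact hk (Fin.ext h)
  set t : ℤ := (lab p x : ℤ) - (k : ℕ) with ht
  have hrt : φ * (t : ℝ) = (n : ℝ) * (2 * Real.pi) := by
    rw [ht]; push_cast; linarith [hn]
  have hpi : (0:ℝ) < 2 * Real.pi := by positivity
  have hnt : (n : ℝ) * p = (t : ℝ) := by
    have : (t : ℝ) * (2 * Real.pi) = (n : ℝ) * p * (2 * Real.pi) := by
      rw [hφ] at hrt
      field_simp at hrt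
      rw [hrt]; ring
    have := mul_right_cancel₀ (ne_of_gt hpi) this
    linarith
  have hntz : n * (p : ℤ) = t := by exact_mod_cast hnt
  have hdvd : (p : ℤ) ∣ t := ⟨n, by linarith⟩
  have habs : |t| < (p : ℤ) := by
    rw [abs_lt]
    have hl : lab p x < p := Nat.mod_lt _ (by omega)
    have hkl : (k : ℕ) < p := k.isLt
    omega
  have := Int.eq_zero_of_abs_lt_dvd hdvd habs
  rw [ht] at this
  omega
end

section
/- Let p ≥ 3 be odd and set K = (p−1)/2. There exist matrices W ∈ ℝ^{K×p} and V ∈ ℝ^{p×K} (explicitly W_{k,r} = (2πk/p)·r and V_{ℓ,k} = sin((2πk/p)·ℓ)) such that, for every length m ≥ 2 and every x ∈ X_m with y(x) ≢ 0 (mod p), the sine network scores s(x) = V·sin(Wx) satisfy s_{y(x)}(x) = p/4, s_ℓ(x) = −p/4 for the unique ℓ ≡ −y(x) (mod p), and s_ℓ(x) = 0 for all other ℓ; consequently the unique-argmax predictor outputs y(x) on every x with y(x) ≠ 0, i.e., the network is correct on all inputs except those whose label is the residue 0. -/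
lemma aux_cos_sum_full (p : ℕ) (hp : 0 < p) (a : ℤ) (ha : ¬ (p:ℤ) ∣ a) :
    ∑ k ∈ Finset.range p, Real.cos (2 * Real.pi * a * k / p) = 0 := by
  have hp0 : (p:ℝ) ≠ 0 := Nat.cast_ne_zero.mpr hp.ne'
  have hpi := Real.pi_ne_zero
  set θ : ℝ := 2 * Real.pi * a / p with hθ
  set z : ℂ := Complex.exp (θ * Complex.I) with hz
  have hz1 : z ≠ 1 := by
    intro h
    rw [hz, Complex.exp_eq_one_iff] at h
    obtain ⟨n, hn⟩ := h
    have him := congrArg Complex.im hn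
    simp at him
    have : (a:ℝ) = ((n * p : ℤ) : ℝ) := by
      rw [hθ] at him
      field_simp at him
      have h4 : (2*Real.pi) * (a:ℝ) = (2*Real.pi) * (((n * p : ℤ)):ℝ) := by push_cast; rw [him]; ring
      exact mul_left_cancel₀ (by positivity) h4
    have : a = n * p := by exact_mod_cast this
    exact ha ⟨n, by rw [this]; ring⟩
  have hzp : z ^ p = 1 := by
    rw [hz, ← Complex.exp_nat_mul]
    have h2 : (p:ℂ) * ((θ:ℝ) * Complex.I) = (a:ℂ) * (2 * (Real.pi:ℂ) * Complex.I) := by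
      rw [hθ]
      push_cast
      have : ((p:ℂ)) ≠ 0 := by exact_mod_cast hp0
      field_simp
    rw [h2, Complex.exp_int_mul_two_pi_mul_I]
  have hsum : ∑ k ∈ Finset.range p, z ^ k = 0 := by
    rw [geom_sum_eq hz1, hzp]
    simp
  have hre : ∑ k ∈ Finset.range p, Real.cos (2 * Real.pi * a * k / p)
      = (∑ k ∈ Finset.range p, z ^ k).re := by
    rw [Complex.re_sum]
    refine Finset.sum_congr rfl fun k _ => ?_
    rw [hz, ← Complex.exp_nat_mul]
    have h3 : (k:ℂ) * ((θ:ℝ) * Complex.I) = ((2 * Real.pi * a * k / p : ℝ):ℂ) * Complex.I := by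
      rw [hθ]; push_cast; ring
    rw [h3, Complex.exp_ofReal_mul_I_re]
  rw [hre, hsum, Complex.zero_re]

lemma aux_cos_sum_half (p K : ℕ) (hpK : p = 2 * K + 1) (a : ℤ) :
    ∑ k ∈ Finset.range K, Real.cos (2 * Real.pi * a * (k + 1) / p)
      = if (p:ℤ) ∣ a then (K:ℝ) else -(1/2) := by
  have hp : 0 < p := by omega
  have hp0 : (p:ℝ) ≠ 0 := Nat.cast_ne_zero.mpr hp.ne'
  by_cases hd : (p:ℤ) ∣ a
  · rw [if_pos hd]
    obtain ⟨t, ht⟩ := hd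
    have : ∀ k ∈ Finset.range K, Real.cos (2 * Real.pi * a * (k + 1) / p) = 1 := by
      intro k _
      have hang : 2 * Real.pi * a * ((k:ℝ) + 1) / p = ((t * (k + 1) : ℤ) : ℝ) * (2 * Real.pi) := by
        rw [ht]; push_cast; field_simp
      rw [hang, Real.cos_int_mul_two_pi]
    rw [Finset.sum_congr rfl this]
    simp
  · rw [if_neg hd]
    set F : ℕ → ℝ := fun j => Real.cos (2 * Real.pi * a * j / p) with hF
    have h0 : ∑ k ∈ Finset.range p, F k = 0 := aux_cos_sum_full p hp a hd
    rw [hpK, Finset.sum_range_succ'] at h0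
    have hF0 : F 0 = 1 := by simp [hF]
    rw [hF0] at h0
    have hsplit : ∑ k ∈ Finset.range (2 * K), F (k + 1)
        = ∑ k ∈ Finset.range K, F (k + 1) + ∑ k ∈ Finset.range K, F (K + k + 1) := by
      rw [two_mul, Finset.sum_range_add]
    have hrefl : ∀ j, j < K → F (2 * K - j) = F (j + 1) := by
      intro j hj
      have hc : ((2 * K - j : ℕ) : ℝ) = (p:ℝ) - ((j:ℝ) + 1) := by
        have h1 : ((2 * K - j : ℕ):ℝ) = 2 * (K:ℝ) - j := by
          push_cast [Nat.cast_sub (by omega : j ≤ 2 * K)]; ring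
        have hpc : (p:ℝ) = 2 * (K:ℝ) + 1 := by exact_mod_cast hpK
        rw [h1, hpc]; ring
      simp only [hF]
      rw [hc]
      have hang : 2 * Real.pi * (a:ℝ) * ((p:ℝ) - ((j:ℝ) + 1)) / p
          = (a:ℝ) * (2 * Real.pi) - 2 * Real.pi * a * ((j:ℝ) + 1) / p := by
        field_simp
      rw [hang, Real.cos_sub, Real.cos_int_mul_two_pi,
        show ((a:ℝ)) * (2*Real.pi) = ((2*a : ℤ) : ℝ) * Real.pi by push_cast; ring,
        Real.sin_int_mul_pi]
      push_cast
      ring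
    have hswap : ∑ k ∈ Finset.range K, F (K + k + 1) = ∑ k ∈ Finset.range K, F (k + 1) := by
      rw [← Finset.sum_range_reflect (fun k => F (K + k + 1)) K]
      refine Finset.sum_congr rfl fun j hj => ?_
      rw [Finset.mem_range] at hj
      have he : K + (K - 1 - j) + 1 = 2 * K - j := by omega
      simp only [he]
      exact hrefl j hj
    have hgoal : ∑ k ∈ Finset.range K, Real.cos (2 * Real.pi * a * (k + 1) / p)
        = ∑ k ∈ Finset.range K, F (k + 1) := by
      refine Finset.sum_congr rfl fun k _ => ?_
      simp only [hF]
      push_cast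
      ring_nf
    rw [hgoal]
    rw [hsplit, hswap] at h0
    linarith

lemma aux_score_eq (p : ℕ) (hp : 3 ≤ p) (hodd : Odd p) (x : Fin p → ℕ) (ℓ : Fin p) :
    sineScore (fun (k : Fin ((p-1)/2)) (r : Fin p) => 2 * Real.pi * ((k:ℕ) + 1) / p * ((r:ℕ):ℝ))
      (fun (q : Fin p) (k : Fin ((p-1)/2)) => Real.sin (2 * Real.pi * ((k:ℕ) + 1) / p * ((q:ℕ):ℝ)))
      x ℓ
    = ((if (p:ℤ) ∣ ((ℓ:ℕ):ℤ) - (∑ r : Fin p, (r:ℕ) * x r : ℕ) then (((p-1)/2 : ℕ):ℝ) else -(1/2))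
      - (if (p:ℤ) ∣ ((ℓ:ℕ):ℤ) + (∑ r : Fin p, (r:ℕ) * x r : ℕ) then (((p-1)/2 : ℕ):ℝ) else -(1/2))) / 2 := by
  obtain ⟨n, hn⟩ := hodd
  set K := (p-1)/2 with hK
  have hpK : p = 2 * K + 1 := by omega
  have hp0 : (p:ℝ) ≠ 0 := by positivity
  set S : ℕ := ∑ r : Fin p, (r:ℕ) * x r with hS
  have hinner : ∀ j : Fin K, (∑ r : Fin p, (2 * Real.pi * ((j:ℕ) + 1) / p * ((r:ℕ):ℝ)) * (x r : ℝ))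
      = 2 * Real.pi * ((j:ℕ) + 1) / p * (S:ℝ) := by
    intro j
    rw [hS]
    push_cast
    rw [Finset.mul_sum]
    refine Finset.sum_congr rfl fun r _ => by ring
  have hterm : ∀ j : Fin K,
      Real.sin (2 * Real.pi * ((j:ℕ) + 1) / p * ((ℓ:ℕ):ℝ)) * Real.sin (2 * Real.pi * ((j:ℕ) + 1) / p * (S:ℝ))
      = (Real.cos (2 * Real.pi * ((((ℓ:ℕ):ℤ) - S : ℤ):ℝ) * ((j:ℕ) + 1) / p)
        - Real.cos (2 * Real.pi * ((((ℓ:ℕ):ℤ) + S : ℤ):ℝ) * ((j:ℕ) + 1) / p)) / 2 := by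
    intro j
    have h1 : 2 * Real.pi * ((((ℓ:ℕ):ℤ) - S : ℤ):ℝ) * ((j:ℕ) + 1) / p
        = 2 * Real.pi * ((j:ℕ) + 1) / p * ((ℓ:ℕ):ℝ) - 2 * Real.pi * ((j:ℕ) + 1) / p * (S:ℝ) := by
      push_cast; ring
    have h2 : 2 * Real.pi * ((((ℓ:ℕ):ℤ) + S : ℤ):ℝ) * ((j:ℕ) + 1) / p
        = 2 * Real.pi * ((j:ℕ) + 1) / p * ((ℓ:ℕ):ℝ) + 2 * Real.pi * ((j:ℕ) + 1) / p * (S:ℝ) := by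
      push_cast; ring
    rw [h1, h2, Real.cos_sub, Real.cos_add]
    ring
  unfold sineScore
  calc (∑ j : Fin K, Real.sin (2 * Real.pi * ((j:ℕ) + 1) / p * ((ℓ:ℕ):ℝ)) *
          Real.sin (∑ r : Fin p, (2 * Real.pi * ((j:ℕ) + 1) / p * ((r:ℕ):ℝ)) * (x r : ℝ)))
      = ∑ j : Fin K, (Real.cos (2 * Real.pi * ((((ℓ:ℕ):ℤ) - S : ℤ):ℝ) * ((j:ℕ) + 1) / p)
        - Real.cos (2 * Real.pi * ((((ℓ:ℕ):ℤ) + S : ℤ):ℝ) * ((j:ℕ) + 1) / p)) / 2 := by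
        refine Finset.sum_congr rfl fun j _ => ?_
        rw [hinner j, hterm j]
    _ = ((∑ k ∈ Finset.range K, Real.cos (2 * Real.pi * ((((ℓ:ℕ):ℤ) - S : ℤ):ℝ) * (k + 1) / p))
        - (∑ k ∈ Finset.range K, Real.cos (2 * Real.pi * ((((ℓ:ℕ):ℤ) + S : ℤ):ℝ) * (k + 1) / p))) / 2 := by
        rw [← Fin.sum_univ_eq_sum_range (fun k => Real.cos (2 * Real.pi * ((((ℓ:ℕ):ℤ) - S : ℤ):ℝ) * (k + 1) / p)) K,
           ← Fin.sum_univ_eq_sum_range (fun k => Real.cos (2 * Real.pi * ((((ℓ:ℕ):ℤ) + S : ℤ):ℝ) * (k + 1) / p)) K]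
        rw [← Finset.sum_sub_distrib, Finset.sum_div]
    _ = _ := by rw [aux_cos_sum_half p K hpK, aux_cos_sum_half p K hpK]

theorem sine_length_agnostic_odd (p : ℕ) (hp : 3 ≤ p) (hodd : Odd p) :
    ∃ (W : Fin ((p - 1) / 2) → Fin p → ℝ) (V : Fin p → Fin ((p - 1) / 2) → ℝ),
      (∀ k r, W k r = 2 * Real.pi * ((k : ℕ) + 1) / p * ((r : ℕ) : ℝ)) ∧
      (∀ ℓ k, V ℓ k = Real.sin (2 * Real.pi * ((k : ℕ) + 1) / p * ((ℓ : ℕ) : ℝ))) ∧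
      ∀ m : ℕ, 2 ≤ m → ∀ x : Fin p → ℕ, (∑ r, x r) = m → lab p x ≠ 0 →
        (∀ ℓ : Fin p, (ℓ : ℕ) = lab p x → sineScore W V x ℓ = p / 4) ∧
        (∀ ℓ : Fin p, ((ℓ : ℕ) + lab p x) % p = 0 → sineScore W V x ℓ = -(p / 4)) ∧
        (∀ ℓ : Fin p, (ℓ : ℕ) ≠ lab p x → ((ℓ : ℕ) + lab p x) % p ≠ 0 →
            sineScore W V x ℓ = 0) ∧
        ∃ ℓ : Fin p, (ℓ : ℕ) = lab p x ∧
          ∀ k : Fin p, k ≠ ℓ → sineScore W V x k < sineScore W V x ℓ := by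
  obtain ⟨n, hn⟩ := hodd
  have hp0 : 0 < p := by omega
  have hpK : p = 2 * ((p-1)/2) + 1 := by omega
  have hpR : (p:ℝ) = 2 * (((p-1)/2 : ℕ):ℝ) + 1 := by exact_mod_cast hpK
  have hpRpos : (0:ℝ) < p := by positivity
  set WW : Fin ((p-1)/2) → Fin p → ℝ := fun k r => 2 * Real.pi * ((k:ℕ) + 1) / p * ((r:ℕ):ℝ) with hWW
  set VV : Fin p → Fin ((p-1)/2) → ℝ := fun q k => Real.sin (2 * Real.pi * ((k:ℕ) + 1) / p * ((q:ℕ):ℝ)) with hVV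
  refine ⟨WW, VV, fun k r => rfl, fun ℓ k => rfl, ?_⟩
  intro m hm x hxm hlab
  set S : ℕ := ∑ r : Fin p, (r:ℕ) * x r with hS
  have hLdef : lab p x = S % p := rfl
  have hLlt : lab p x < p := Nat.mod_lt _ hp0
  have hd1 : ∀ ℓ : Fin p, ((p:ℤ) ∣ ((ℓ:ℕ):ℤ) - (S:ℤ)) ↔ (ℓ:ℕ) = lab p x := by
    intro ℓ
    rw [show (((ℓ:ℕ):ℤ) - (S:ℤ)) = -((S:ℤ) - ((ℓ:ℕ):ℤ)) by ring, dvd_neg,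
      ← Nat.modEq_iff_dvd]
    unfold Nat.ModEq
    rw [Nat.mod_eq_of_lt ℓ.isLt, hLdef]
  have hd2 : ∀ ℓ : Fin p, ((p:ℤ) ∣ ((ℓ:ℕ):ℤ) + (S:ℤ)) ↔ ((ℓ:ℕ) + lab p x) % p = 0 := by
    intro ℓ
    rw [show (((ℓ:ℕ):ℤ) + (S:ℤ)) = (((ℓ:ℕ) + S : ℕ) : ℤ) by push_cast; ring,
      Int.natCast_dvd_natCast, Nat.dvd_iff_mod_eq_zero, hLdef,
      Nat.add_mod (ℓ:ℕ) (S % p), Nat.mod_mod_of_dvd S dvd_rfl, ← Nat.add_mod]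
  have hexcl : ∀ ℓ : Fin p, (ℓ:ℕ) = lab p x → ((ℓ:ℕ) + lab p x) % p ≠ 0 := by
    intro ℓ h hcontra
    rw [h] at hcontra
    have hdvd : p ∣ 2 * lab p x := by
      have : p ∣ lab p x + lab p x := Nat.dvd_iff_mod_eq_zero.mpr hcontra
      rwa [two_mul]
    have hcop : Nat.Coprime p 2 := Nat.coprime_two_right.mpr ⟨n, hn⟩
    have hdL : p ∣ lab p x := hcop.dvd_of_dvd_mul_left hdvd
    exact hlab (Nat.eq_zero_of_dvd_of_lt hdL hLlt)
  have harith1 : (((((p-1)/2 : ℕ)):ℝ) - (-(1/2))) / 2 = (p:ℝ) / 4 := by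
    rw [hpR]; ring
  have harith2 : ((-(1/2) : ℝ) - ((((p-1)/2 : ℕ)):ℝ)) / 2 = -((p:ℝ) / 4) := by
    rw [hpR]; ring
  have b1 : ∀ ℓ : Fin p, (ℓ : ℕ) = lab p x → sineScore WW VV x ℓ = (p:ℝ) / 4 := by
    intro ℓ h
    rw [aux_score_eq p hp ⟨n, hn⟩ x ℓ, if_pos ((hd1 ℓ).mpr h),
      if_neg (fun hc => hexcl ℓ h ((hd2 ℓ).mp hc)), harith1]
  have b2 : ∀ ℓ : Fin p, ((ℓ : ℕ) + lab p x) % p = 0 → sineScore WW VV x ℓ = -((p:ℝ) / 4) := by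
    intro ℓ h
    have hne : (ℓ:ℕ) ≠ lab p x := fun he => hexcl ℓ he h
    rw [aux_score_eq p hp ⟨n, hn⟩ x ℓ, if_neg (fun hc => hne ((hd1 ℓ).mp hc)),
      if_pos ((hd2 ℓ).mpr h), harith2]
  have b3 : ∀ ℓ : Fin p, (ℓ : ℕ) ≠ lab p x → ((ℓ : ℕ) + lab p x) % p ≠ 0 →
      sineScore WW VV x ℓ = 0 := by
    intro ℓ h1 h2
    rw [aux_score_eq p hp ⟨n, hn⟩ x ℓ, if_neg (fun hc => h1 ((hd1 ℓ).mp hc)),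
      if_neg (fun hc => h2 ((hd2 ℓ).mp hc))]
    ring
  refine ⟨b1, b2, b3, ⟨lab p x, hLlt⟩, rfl, ?_⟩
  intro k hk
  have hkv : (k:ℕ) ≠ lab p x := by
    intro h
    exact hk (Fin.ext h)
  rw [b1 ⟨lab p x, hLlt⟩ rfl]
  by_cases hc : ((k:ℕ) + lab p x) % p = 0
  · rw [b2 k hc]; linarith
  · rw [b3 k hkv hc]; linarith
end

section
/- Let m ≥ 2 and p ≥ 2 be integers and let W ∈ ℝ^{d×p}, V ∈ ℝ^{p×d}. If the two-layer ReLU network s(x) = V·ReLU(Wx) exactly realizes modular addition on X_m — i.e., for every x ∈ X_m the score s_{y(x)}(x) is strictly greater than s_k(x) for all k ≠ y(x) — then the width satisfies d ≥ (m − p)/(p + 2). -/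
/-- Score of a two-layer ReLU network on a bag-of-tokens input. -/
noncomputable def reluScore {p d : ℕ} (W : Fin d → Fin p → ℝ) (V : Fin p → Fin d → ℝ)
    (x : Fin p → ℕ) (q : Fin p) : ℝ :=
  ∑ j, V q j * max (∑ r, W j r * (x r : ℝ)) 0

open Finset


lemma count_lemma {p d : ℕ} (m : ℕ)
    (σ : ℕ → Fin d → Bool) (ℓ : ℕ → Fin p) (c : (Fin d → Bool) → Fin p → ℝ)
    (Hσ : ∀ (j : Fin d) (s t u : ℕ), s ≤ t → t ≤ u → σ s j = σ u j → σ t j = σ s j)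
    (Hslope : ∀ t, t + 1 ≤ m → σ t = σ (t + 1) →
      c (σ t) (ℓ t) < c (σ t) (ℓ (t + 1))) :
    m ≤ d + (d + 1) * p := by
  classical
  set K : ℕ → Finset (Fin d) := fun t => univ.filter fun j => σ t j ≠ σ 0 j with hK
  have hKmono : ∀ {s t : ℕ}, s ≤ t → K s ⊆ K t := by
    intro s t hst
    intro j hj
    simp only [hK, mem_filter, mem_univ, true_and] at hj ⊢
    intro h
    exact hj (Hσ j 0 s t (Nat.zero_le _) hst h.symm)
  have hKdet : ∀ s t : ℕ, K s = K t → ∀ j, σ s j = σ t j := by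
    intro s t h j
    have : (σ s j ≠ σ 0 j) ↔ (σ t j ≠ σ 0 j) := by
      constructor <;> intro hx
      · have : j ∈ K s := by simp [hK, hx]
        rw [h] at this; simpa [hK] using this
      · have : j ∈ K t := by simp [hK, hx]
        rw [← h] at this; simpa [hK] using this
    revert this
    cases σ s j <;> cases σ t j <;> cases σ 0 j <;> simp
  set NC : Finset ℕ := (range m).filter fun t => ¬ (σ t = σ (t + 1)) with hNC
  set C : Finset ℕ := (range m).filter fun t => σ t = σ (t + 1) with hC
  have hsplit : C.card + NC.card = m := by
    have := Finset.card_filter_add_card_filter_not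
      (s := range m) (p := fun t => σ t = σ (t + 1))
    simpa [hC, hNC] using this
  -- flip uniqueness
  have flip_unique : ∀ (j : Fin d) (t t' : ℕ), t < t' →
      σ t j ≠ σ (t + 1) j → σ t' j ≠ σ (t' + 1) j → False := by
    intro j t t' hlt h1 h2
    by_cases hA : σ t j = σ t' j
    · exact h1 (Hσ j t (t + 1) t' (Nat.le_succ t) hlt hA).symm
    · have hAD : σ t j = σ (t' + 1) j := by
        revert hA h2; cases σ t j <;> cases σ t' j <;> cases σ (t' + 1) j <;> simp
      have := Hσ j t t' (t' + 1) (le_of_lt hlt) (Nat.le_succ t') hAD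
      exact hA this.symm
  have hNCcard : NC.card ≤ d := by
    by_cases hd : d = 0
    · have : NC = ∅ := by
        apply Finset.eq_empty_of_forall_notMem
        intro t ht
        simp only [hNC, mem_filter] at ht
        exact ht.2 (funext fun j => absurd j.2 (by omega))
      simp [this]
    · have : Nonempty (Fin d) := ⟨⟨0, by omega⟩⟩
      have hex : ∀ t, ¬ (σ t = σ (t+1)) → ∃ j, σ t j ≠ σ (t + 1) j := by
        intro t ht
        by_contra hno
        push_neg at hno
        exact ht (funext hno)
      set f : ℕ → Fin d := fun t =>
        if h : ∃ j, σ t j ≠ σ (t + 1) j then h.choose else Classical.arbitrary _ with hf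
      have hfspec : ∀ t ∈ NC, σ t (f t) ≠ σ (t + 1) (f t) := by
        intro t ht
        simp only [hNC, mem_filter] at ht
        have h := hex t ht.2
        simp only [hf, dif_pos h]
        exact h.choose_spec
      have : NC.card ≤ (univ : Finset (Fin d)).card := by
        apply Finset.card_le_card_of_injOn f (fun t _ => mem_univ _)
        intro t ht t' ht' hfe
        by_contra hne
        rcases lt_or_ge t t' with h | h
        · exact flip_unique (f t) t t' h (hfspec t ht) (hfe ▸ hfspec t' ht')
        · have h' : t' < t := by omega
          exact flip_unique (f t) t' t h' (hfe ▸ hfspec t' ht') (hfspec t ht)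
      simpa using this
  -- image of K
  set Kimg : Finset (Finset (Fin d)) := (range (m + 1)).image K with hKimg
  have hKimgcard : Kimg.card ≤ d + 1 := by
    have hinj : Set.InjOn Finset.card (Kimg : Set (Finset (Fin d))) := by
      intro S hS S' hS' hcard
      simp only [hKimg, coe_image, Set.mem_image, mem_coe, mem_range] at hS hS'
      obtain ⟨s, _, rfl⟩ := hS
      obtain ⟨s', _, rfl⟩ := hS'
      rcases le_or_gt s s' with h | h
      · exact Finset.eq_of_subset_of_card_le (hKmono h) (le_of_eq hcard.symm)
      · exact (Finset.eq_of_subset_of_card_le (hKmono (le_of_lt h)) (le_of_eq hcard)).symm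
    calc Kimg.card = (Kimg.image Finset.card).card := (Finset.card_image_of_injOn hinj).symm
      _ ≤ (range (d + 1)).card := by
          apply Finset.card_le_card
          intro n hn
          simp only [mem_image] at hn
          obtain ⟨S, _, rfl⟩ := hn
          simp only [mem_range]
          exact Nat.lt_succ_of_le (le_trans (Finset.card_le_univ S) (by simp))
      _ = d + 1 := by simp
  -- clean intervals injectivity
  have key : ∀ t ∈ C, ∀ t' ∈ C, t < t' → K t = K t' → ℓ (t + 1) ≠ ℓ (t' + 1) := by
    intro t ht t' ht' hlt hKeq
    simp only [hC, mem_filter, mem_range] at ht ht'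
    have hσtt' : ∀ j, σ t j = σ t' j := hKdet t t' hKeq
    -- all s in [t, t'] have σ s = σ t
    have hblock : ∀ s, t ≤ s → s ≤ t' → ∀ j, σ s j = σ t j := by
      intro s h1 h2 j
      have hsub1 : K t ⊆ K s := hKmono h1
      have hsub2 : K s ⊆ K t' := hKmono h2
      have : K s = K t := Finset.Subset.antisymm (hKeq ▸ hsub2) hsub1
      exact hKdet s t this j
    have hclean : ∀ s, t ≤ s → s ≤ t' → σ s = σ (s + 1) := by
      intro s h1 h2
      rcases Nat.lt_or_ge s t' with h | h
      · funext j
        rw [hblock s h1 h2 j, hblock (s+1) (by omega) (by omega) j]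
      · have : s = t' := by omega
        subst this
        exact ht'.2
    have hσeq : ∀ s, t ≤ s → s ≤ t' → σ s = σ t := by
      intro s h1 h2; funext j; exact hblock s h1 h2 j
    have hstep : ∀ s, t ≤ s → s ≤ t' → c (σ t) (ℓ s) < c (σ t) (ℓ (s + 1)) := by
      intro s h1 h2
      have := Hslope s (by omega) (hclean s h1 h2)
      rwa [hσeq s h1 h2] at this
    have hchain : ∀ n, t + 1 ≤ n → n ≤ t' → c (σ t) (ℓ (t + 1)) ≤ c (σ t) (ℓ n) := by
      intro n
      induction n with
      | zero => intro h; omega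
      | succ n ih =>
        intro h1 h2
        rcases Nat.lt_or_ge (t + 1) (n + 1) with h | h
        · have hn1 : t + 1 ≤ n := by omega
          exact le_trans (ih hn1 (by omega)) (le_of_lt (hstep n (by omega) (by omega)))
        · have : t + 1 = n + 1 := by omega
          rw [← this]
    have hfin : c (σ t) (ℓ (t + 1)) < c (σ t) (ℓ (t' + 1)) :=
      lt_of_le_of_lt (hchain t' (by omega) le_rfl) (hstep t' (le_of_lt hlt) le_rfl)
    intro heq
    rw [heq] at hfin
    exact lt_irrefl _ hfin
  have hCcard : C.card ≤ (d + 1) * p := by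
    have : C.card ≤ (Kimg ×ˢ (univ : Finset (Fin p))).card := by
      apply Finset.card_le_card_of_injOn (fun t => (K t, ℓ (t + 1)))
      · intro t ht
        simp only [mem_coe, hC, mem_filter, mem_range] at ht
        simp only [mem_coe, Finset.mem_product, mem_univ, and_true]
        simp only [hKimg, mem_image]
        exact ⟨t, by simp [mem_range]; omega, rfl⟩
      · intro t ht t' ht' he
        by_contra hne
        simp only [Prod.mk.injEq] at he
        rcases lt_or_ge t t' with h | h
        · exact key t ht t' ht' h he.1 he.2
        · exact key t' ht' t ht (by omega) he.1.symm he.2.symm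
    calc C.card ≤ (Kimg ×ˢ (univ : Finset (Fin p))).card := this
      _ = Kimg.card * p := by simp [Finset.card_product]
      _ ≤ (d + 1) * p := Nat.mul_le_mul_right p hKimgcard
  omega

theorem relu_width_lower_bound (m p d : ℕ) (hm : 2 ≤ m) (hp : 2 ≤ p)
    (W : Fin d → Fin p → ℝ) (V : Fin p → Fin d → ℝ)
    (hrealize : ∀ x : Fin p → ℕ, (∑ r, x r) = m →
      ∃ ℓ : Fin p, (ℓ : ℕ) = lab p x ∧
        ∀ k : Fin p, k ≠ ℓ → reluScore W V x k < reluScore W V x ℓ) :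
    ((m : ℝ) - p) / (p + 2) ≤ d := by
  classical
  haveI : NeZero p := ⟨by omega⟩
  set a : Fin d → ℝ := fun j => W j 0 * m with ha
  set b : Fin d → ℝ := fun j => W j 1 - W j 0 with hb
  set x : ℕ → Fin p → ℕ :=
    fun t r => (if r = 0 then m - t else 0) + (if r = 1 then t else 0) with hx
  have hv1 : ((1 : Fin p) : ℕ) = 1 := by
    rw [Fin.val_one']
    exact Nat.mod_eq_of_lt (by omega)
  have hsum : ∀ t, t ≤ m → (∑ r, x t r) = m := by
    intro t ht
    simp only [hx]
    rw [Finset.sum_add_distrib, Finset.sum_ite_eq', Finset.sum_ite_eq']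
    simp only [mem_univ, if_true]
    omega
  have hlab : ∀ t, t ≤ m → lab p (x t) = t % p := by
    intro t ht
    unfold lab
    have : (∑ r : Fin p, (r : ℕ) * x t r) = t := by
      simp only [hx, Nat.mul_add, mul_ite, Nat.mul_zero]
      rw [Finset.sum_add_distrib, Finset.sum_ite_eq', Finset.sum_ite_eq']
      simp only [mem_univ, if_true, hv1, Fin.val_zero]
      omega
    rw [this]
  have hinner : ∀ t, t ≤ m → ∀ j, (∑ r, W j r * (x t r : ℝ)) = a j + b j * t := by
    intro t ht j
    have hcast : ((m - t : ℕ) : ℝ) = (m : ℝ) - t := by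
      rw [Nat.cast_sub ht]
    calc (∑ r, W j r * (x t r : ℝ))
        = ∑ r, ((if r = 0 then W j r * ((m - t : ℕ) : ℝ) else 0)
              + (if r = 1 then W j r * (t : ℝ) else 0)) := by
          apply Finset.sum_congr rfl
          intro r _
          simp only [hx, Nat.cast_add, apply_ite (Nat.cast : ℕ → ℝ), Nat.cast_zero,
            mul_add, mul_ite, mul_zero]
      _ = W j 0 * ((m - t : ℕ) : ℝ) + W j 1 * (t : ℝ) := by
          rw [Finset.sum_add_distrib, Finset.sum_ite_eq', Finset.sum_ite_eq']
          simp only [mem_univ, if_true]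
      _ = a j + b j * t := by rw [hcast]; simp only [ha, hb]; ring
  have hg : ∀ t, t ≤ m → ∀ k,
      reluScore W V (x t) k = ∑ j, V k j * max (a j + b j * t) 0 := by
    intro t ht k
    unfold reluScore
    apply Finset.sum_congr rfl
    intro j _
    rw [hinner t ht j]
  have hL : ∀ t, t ≤ m → ∃ l : Fin p, (l : ℕ) = lab p (x t) ∧
      ∀ k : Fin p, k ≠ l → reluScore W V (x t) k < reluScore W V (x t) l :=
    fun t ht => hrealize (x t) (hsum t ht)
  set ℓ : ℕ → Fin p := fun t => if h : t ≤ m then (hL t h).choose else 0 with hℓ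
  have hℓval : ∀ t, t ≤ m → ((ℓ t : ℕ)) = t % p := by
    intro t ht
    simp only [hℓ, dif_pos ht]
    rw [(hL t ht).choose_spec.1, hlab t ht]
  have hℓwin : ∀ t, t ≤ m → ∀ k, k ≠ ℓ t →
      reluScore W V (x t) k < reluScore W V (x t) (ℓ t) := by
    intro t ht
    simp only [hℓ, dif_pos ht]
    exact (hL t ht).choose_spec.2
  set σ : ℕ → Fin d → Bool := fun t j => decide (0 ≤ a j + b j * t) with hσ
  have Hσ : ∀ (j : Fin d) (s t u : ℕ), s ≤ t → t ≤ u → σ s j = σ u j → σ t j = σ s j := by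
    intro j s t u h1 h2 h3
    have hiff : (0 ≤ a j + b j * s) ↔ (0 ≤ a j + b j * u) := by
      simpa [hσ, decide_eq_decide] using h3
    show decide _ = decide _
    rw [decide_eq_decide]
    rcases le_or_gt 0 (b j) with hbj | hbj
    · have m1 : a j + b j * (s : ℕ) ≤ a j + b j * (t : ℕ) := by
        have := mul_le_mul_of_nonneg_left (Nat.cast_le.mpr h1 : (s:ℝ) ≤ t) hbj
        linarith
      have m2 : a j + b j * (t : ℕ) ≤ a j + b j * (u : ℕ) := by
        have := mul_le_mul_of_nonneg_left (Nat.cast_le.mpr h2 : (t:ℝ) ≤ u) hbj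
        linarith
      constructor
      · intro h; exact hiff.mpr (le_trans h m2)
      · intro h; linarith
    · have m1 : a j + b j * (t : ℕ) ≤ a j + b j * (s : ℕ) := by
        have := mul_le_mul_of_nonpos_left (Nat.cast_le.mpr h1 : (s:ℝ) ≤ t) (le_of_lt hbj)
        linarith
      have m2 : a j + b j * (u : ℕ) ≤ a j + b j * (t : ℕ) := by
        have := mul_le_mul_of_nonpos_left (Nat.cast_le.mpr h2 : (t:ℝ) ≤ u) (le_of_lt hbj)
        linarith
      constructor
      · intro h; linarith
      · intro h; have hu := hiff.mp h; linarith
  set c : (Fin d → Bool) → Fin p → ℝ :=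
    fun P k => ∑ j, V k j * (if P j then b j else 0) with hc
  have hmodne : ∀ t : ℕ, t % p ≠ (t + 1) % p := by
    intro t
    have e1 : (t + 1) % p = (t % p + 1 % p) % p := Nat.add_mod t 1 p
    have e2 : 1 % p = 1 := Nat.mod_eq_of_lt (by omega)
    rw [e2] at e1
    have e3 : t % p < p := Nat.mod_lt t (by omega)
    rcases lt_or_ge (t % p + 1) p with h | h
    · have e4 : (t % p + 1) % p = t % p + 1 := Nat.mod_eq_of_lt h
      omega
    · have e5 : t % p + 1 = p := by omega
      have e6 : (t % p + 1) % p = 0 := by rw [e5, Nat.mod_self]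
      omega
  have Hslope : ∀ t, t + 1 ≤ m → σ t = σ (t + 1) →
      c (σ t) (ℓ t) < c (σ t) (ℓ (t + 1)) := by
    intro t ht hcl
    have hstep : ∀ k, reluScore W V (x (t + 1)) k = reluScore W V (x t) k + c (σ t) k := by
      intro k
      rw [hg (t + 1) ht k, hg t (by omega) k]
      simp only [hc]
      rw [← Finset.sum_add_distrib]
      apply Finset.sum_congr rfl
      intro j _
      have hj : σ t j = σ (t + 1) j := by rw [hcl]
      by_cases h0 : 0 ≤ a j + b j * (t : ℕ)
      · have hjt : σ t j = true := by simp [hσ, h0]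
        have h0' : 0 ≤ a j + b j * ((t + 1 : ℕ) : ℝ) := by
          have : σ (t + 1) j = true := by rw [← hj, hjt]
          simpa [hσ] using this
        rw [hjt, if_pos rfl, max_eq_left h0', max_eq_left h0]
        push_cast
        ring
      · have hjt : σ t j = false := by simp [hσ, h0]
        have h0' : ¬ 0 ≤ a j + b j * ((t + 1 : ℕ) : ℝ) := by
          have : σ (t + 1) j = false := by rw [← hj, hjt]
          simpa [hσ] using this
        rw [hjt, if_neg (by simp), max_eq_right (le_of_lt (lt_of_not_ge h0)),
          max_eq_right (le_of_lt (lt_of_not_ge h0'))]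
        ring
    have hne : ℓ t ≠ ℓ (t + 1) := by
      intro he
      have h1 := hℓval t (by omega)
      have h2 := hℓval (t + 1) ht
      rw [he] at h1
      exact hmodne t (h1 ▸ h2 ▸ rfl)
    have hw1 := hℓwin t (by omega) (ℓ (t + 1)) (Ne.symm hne)
    have hw2 := hℓwin (t + 1) ht (ℓ t) hne
    rw [hstep (ℓ t), hstep (ℓ (t + 1))] at hw2
    linarith
  have hcount : m ≤ d + (d + 1) * p := count_lemma m σ ℓ c Hσ Hslope
  have hcast : (m : ℝ) ≤ (d : ℝ) + ((d : ℝ) + 1) * p := by exact_mod_cast hcount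
  have hd0 : (0 : ℝ) ≤ d := Nat.cast_nonneg d
  rw [div_le_iff₀ (by positivity : (0 : ℝ) < (p : ℝ) + 2)]
  nlinarith
end

section
/- Let p ≥ 2 and let m₁, m₂ ≥ 1 be integers with m₁ ≢ m₂ (mod p). Then there exist no matrices W ∈ ℝ^{d×p}, V ∈ ℝ^{p×d} (for any width d) such that the two-layer ReLU network s(x) = V·ReLU(Wx) satisfies, for every x ∈ X_{m₁} ∪ X_{m₂}, that s_{y(x)}(x) > s_k(x) for all k ≠ y(x). In particular, the scalings x⁽¹⁾ = m₁·e₀ and x⁽²⁾ = m₂·e₀ lie on a common ray, the ReLU network's prediction is invariant under positive scaling of the input, yet their labels m₁ mod p and m₂ mod p differ, so at least one of them is misclassified. -/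
lemma score_scale {p d : ℕ} (W : Fin d → Fin p → ℝ) (V : Fin p → Fin d → ℝ)
    (one : Fin p) (m : ℕ) (q : Fin p) :
    reluScore W V (fun r => if r = one then m else 0) q
      = m * ∑ j, V q j * max (W j one) 0 := by
  unfold reluScore
  rw [Finset.mul_sum]
  refine Finset.sum_congr rfl fun j _ => ?_
  have h1 : ∑ r, W j r * (((if r = one then m else 0 : ℕ) : ℝ)) = W j one * m := by
    rw [Finset.sum_eq_single one]
    · simp
    · intro b _ hb; simp [hb]
    · simp
  rw [h1]
  have h2 : max (W j one * m) 0 = max (W j one) 0 * m := by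
    rw [max_mul_of_nonneg _ _ (by positivity : (0:ℝ) ≤ m), zero_mul]
  rw [h2]; ring

theorem relu_no_two_incongruent_lengths (p m₁ m₂ : ℕ) (hp : 2 ≤ p)
    (h₁ : 1 ≤ m₁) (h₂ : 1 ≤ m₂) (hmod : m₁ % p ≠ m₂ % p) :
    ¬ ∃ (d : ℕ) (W : Fin d → Fin p → ℝ) (V : Fin p → Fin d → ℝ),
        ∀ x : Fin p → ℕ, ((∑ r, x r) = m₁ ∨ (∑ r, x r) = m₂) →
          ∃ ℓ : Fin p, (ℓ : ℕ) = lab p x ∧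
            ∀ k : Fin p, k ≠ ℓ → reluScore W V x k < reluScore W V x ℓ := by
  rintro ⟨d, W, V, h⟩
  set one : Fin p := ⟨1, by omega⟩ with hone
  set c : Fin p → ℝ := fun q => ∑ j, V q j * max (W j one) 0 with hc
  have key : ∀ m : ℕ, 1 ≤ m → (m = m₁ ∨ m = m₂) →
      ∃ ℓ : Fin p, (ℓ : ℕ) = m % p ∧ ∀ k : Fin p, k ≠ ℓ → c k < c ℓ := by
    intro m hm hm'
    set x : Fin p → ℕ := fun r => if r = one then m else 0 with hx
    have hsum : (∑ r, x r) = m := by simp [hx]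
    have hlab : lab p x = m % p := by
      unfold lab
      congr 1
      rw [Finset.sum_eq_single one]
      · simp [hx, hone]
      · intro b _ hb; simp [hx, hb]
      · simp
    obtain ⟨ℓ, hℓ, hs⟩ := h x (by rw [hsum]; exact hm')
    refine ⟨ℓ, by rw [hℓ, hlab], fun k hk => ?_⟩
    have := hs k hk
    rw [show x = (fun r => if r = one then m else 0) from rfl, score_scale, score_scale] at this
    exact lt_of_mul_lt_mul_left this (by positivity)
  obtain ⟨ℓ₁, hl1, hs1⟩ := key m₁ h₁ (Or.inl rfl)
  obtain ⟨ℓ₂, hl2, hs2⟩ := key m₂ h₂ (Or.inr rfl)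
  have hne : ℓ₁ ≠ ℓ₂ := by
    intro e; apply hmod; rw [← hl1, e, hl2]
  exact absurd (hs2 ℓ₁ hne) (not_lt.2 (le_of_lt (hs1 ℓ₂ (Ne.symm hne))))
end

section
/- For an integer m ≥ 1, let 𝒦_m = {k = (k₁,…,k_m) ∈ ℤ_{≥0}^m : Σ_{j=1}^m j·k_j = m} and define N_tot(m) = Σ_{k ∈ 𝒦_m} 2^{|k|} · ∏_{j=1}^m (k_j + 1), where |k| = Σ_{j=1}^m k_j. Then m·2^m ≤ N_tot(m) ≤ 13·m·2^m. -/
/-- `Ntot m = Σ_{k ∈ 𝒦_m} 2^{|k|} · ∏_{j=1}^m (k_j + 1)`, where `𝒦_m` indexes the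
partitions of `m` (with `k_j` the multiplicity of the part `j`), `|k| = Σ_j k_j`
is the total number of parts. -/
def Ntot (m : ℕ) : ℕ :=
  ∑ P : Nat.Partition m,
    2 ^ (Multiset.card P.parts) *
      ∏ j ∈ Finset.Icc 1 m, (Multiset.count j P.parts + 1)


namespace NtotAux

variable {m : ℕ}

/-- the all-ones partition -/
def triv (m : ℕ) : Nat.Partition m where
  parts := Multiset.replicate m 1
  parts_pos := fun {i} hi => by rw [Multiset.eq_of_mem_replicate hi]; norm_num
  parts_sum := by simp

lemma mem_Icc_of_mem_parts (P : Nat.Partition m) {j : ℕ} (hj : j ∈ P.parts) :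
    j ∈ Finset.Icc 1 m := by
  rw [Finset.mem_Icc]
  exact ⟨P.parts_pos hj, by
    simpa [P.parts_sum] using Multiset.single_le_sum (fun x _ => Nat.zero_le x) j hj⟩

lemma count_eq_zero_of_not_Icc (P : Nat.Partition m) {j : ℕ} (hj : j ∉ Finset.Icc 1 m) :
    P.parts.count j = 0 :=
  Multiset.count_eq_zero_of_notMem (fun h => hj (mem_Icc_of_mem_parts P h))

lemma card_eq (P : Nat.Partition m) :
    Multiset.card P.parts = ∑ j ∈ Finset.Icc 1 m, P.parts.count j := by
  rw [← Multiset.toFinset_sum_count_eq]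
  apply Finset.sum_subset
  · intro j hj
    exact mem_Icc_of_mem_parts P (Multiset.mem_toFinset.1 hj)
  · intro j _ hj
    exact Multiset.count_eq_zero_of_notMem (fun h => hj (Multiset.mem_toFinset.2 h))

lemma sum_eq (P : Nat.Partition m) :
    ∑ j ∈ Finset.Icc 1 m, j * P.parts.count j = m := by
  have h : P.parts.sum = ∑ j ∈ P.parts.toFinset, j * P.parts.count j := by
    conv_lhs => rw [← Multiset.toFinset_sum_count_nsmul_eq P.parts]
    rw [Multiset.sum_sum]
    exact Finset.sum_congr rfl fun j _ => by simp [Multiset.sum_nsmul, mul_comm]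
  conv_rhs => rw [← P.parts_sum, h]
  exact (Finset.sum_subset (fun j hj => mem_Icc_of_mem_parts P (Multiset.mem_toFinset.1 hj))
    (fun j _ hj => by
      rw [Multiset.count_eq_zero_of_notMem (fun h => hj (Multiset.mem_toFinset.2 h)), mul_zero])).symm

lemma Icc_insert (hm : 1 ≤ m) : Finset.Icc 1 m = insert 1 (Finset.Icc 2 m) := by
  ext j; simp only [Finset.mem_Icc, Finset.mem_insert]; omega

/-- key decomposition of m -/
lemma m_eq (hm : 1 ≤ m) (P : Nat.Partition m) :
    m = Multiset.card P.parts + ∑ j ∈ Finset.Icc 2 m, (j - 1) * P.parts.count j := by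
  have h1 := card_eq P
  have h2 := sum_eq P
  have h3 : ∑ j ∈ Finset.Icc 1 m, j * P.parts.count j
      = ∑ j ∈ Finset.Icc 1 m, (P.parts.count j + (j - 1) * P.parts.count j) := by
    apply Finset.sum_congr rfl
    intro j hj
    rw [Finset.mem_Icc] at hj
    obtain ⟨i, rfl⟩ := Nat.exists_eq_add_of_le hj.1
    simp [Nat.add_mul, Nat.one_add, Nat.succ_mul, Nat.add_comm]
  rw [h3, Finset.sum_add_distrib, Icc_insert hm, Finset.sum_insert (by simp),
    Finset.sum_insert (by simp)] at h2
  rw [Icc_insert hm, Finset.sum_insert (by simp)] at h1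
  simp only [Nat.sub_self, Nat.zero_mul, Nat.zero_add] at h2
  omega


/-- `x j = 2^{-(j-1)}` -/
def x (j : ℕ) : ℚ := ((2:ℚ)^(j-1))⁻¹

lemma x_nonneg (j : ℕ) : 0 ≤ x j := by rw [x]; positivity

lemma x_le_half {j : ℕ} (hj : 2 ≤ j) : x j ≤ 1/2 := by
  rw [x, show (1:ℚ)/2 = ((2:ℚ)^1)⁻¹ by norm_num]
  apply inv_anti₀ (by norm_num)
  apply pow_le_pow_right₀ (by norm_num)
  omega

lemma x_le_one (j : ℕ) : x j ≤ 1 := by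
  rw [x]
  apply inv_le_one_of_one_le₀
  exact one_le_pow₀ (by norm_num)

lemma one_sub_x_pos {j : ℕ} (hj : 2 ≤ j) : 0 < 1 - x j := by
  have := x_le_half hj; linarith

/-- geometric series identity -/
lemma geom_id (n : ℕ) (q : ℚ) :
    (∑ k ∈ Finset.range n, ((k:ℚ)+1) * q^k) * (1-q)^2
      = 1 - ((n:ℚ)+1)*q^n + (n:ℚ)*q^(n+1) := by
  induction n with
  | zero => simp
  | succ n ih =>
    rw [Finset.sum_range_succ, add_mul, ih]
    push_cast
    ring

lemma geom_le (n : ℕ) (q : ℚ) (h0 : 0 ≤ q) (h1 : q ≤ 1/2) :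
    (∑ k ∈ Finset.range n, ((k:ℚ)+1) * q^k) ≤ (1-q)⁻¹^2 := by
  have hq : (0:ℚ) < 1 - q := by linarith
  have hpow : (0:ℚ) ≤ q ^ n := pow_nonneg h0 n
  have key : (∑ k ∈ Finset.range n, ((k:ℚ)+1) * q^k) * (1-q)^2 ≤ 1 := by
    rw [geom_id]
    have : (n:ℚ)*q^(n+1) ≤ ((n:ℚ)+1)*q^n := by
      rw [pow_succ]
      have h2 := mul_le_mul_of_nonneg_left (show q ≤ 1 by linarith)
        (mul_nonneg (Nat.cast_nonneg n : (0:ℚ) ≤ n) hpow)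
      nlinarith [hpow]
    linarith
  rw [inv_pow, inv_eq_one_div, le_div_iff₀ (by positivity)]
  exact key

/-- partial products of `(1-x j)⁻¹` are at most `512/147` -/
lemma R_bound : ∀ n, 4 ≤ n →
    ∏ j ∈ Finset.Icc 2 n, (1 - x j)⁻¹ ≤ (512/147) * (1 - ((2:ℚ)^(n-1))⁻¹) := by
  intro n hn
  induction n, hn using Nat.le_induction with
  | base =>
    rw [show Finset.Icc 2 4 = {2, 3, 4} from by decide]
    norm_num [x, Finset.prod_insert, Finset.mem_insert]
  | succ n hn ih =>
    rw [Finset.prod_Icc_succ_top (show 2 ≤ n+1 by omega)]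
    have hn1 : n - 1 + 1 = n := by omega
    have hx : x (n+1) = ((2:ℚ)^(n-1) * 2)⁻¹ := by
      rw [x, show n+1-1 = n from rfl, ← pow_succ, hn1]
    have ht0 : (0:ℚ) < (2:ℚ)^(n-1) := by positivity
    have ht8 : (8:ℚ) ≤ (2:ℚ)^(n-1) := by
      calc (8:ℚ) = 2^3 := by norm_num
      _ ≤ 2^(n-1) := by apply pow_le_pow_right₀ (by norm_num); omega
    have hu0 : (0:ℚ) < ((2:ℚ)^(n-1) * 2)⁻¹ := by positivity
    have hu : ((2:ℚ)^(n-1) * 2)⁻¹ ≤ 1/16 := by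
      rw [show (1:ℚ)/16 = ((16:ℚ))⁻¹ by norm_num]
      apply inv_anti₀ (by norm_num)
      nlinarith
    have hpos : (0:ℚ) < 1 - ((2:ℚ)^(n-1) * 2)⁻¹ := by linarith
    calc (∏ j ∈ Finset.Icc 2 n, (1 - x j)⁻¹) * (1 - x (n+1))⁻¹
        ≤ (512/147) * (1 - ((2:ℚ)^(n-1))⁻¹) * (1 - x (n+1))⁻¹ := by
          apply mul_le_mul_of_nonneg_right ih
          rw [hx]; positivity
      _ ≤ 512/147 * (1 - ((2:ℚ)^(n+1-1))⁻¹) := by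
          rw [hx, show n+1-1 = n from rfl, ← hn1, pow_succ, hn1]
          rw [← div_eq_mul_inv, div_le_iff₀ hpos]
          have hti : ((2:ℚ)^(n-1))⁻¹ = 2 * ((2:ℚ)^(n-1) * 2)⁻¹ := by
            rw [mul_inv]; field_simp
          rw [hti]
          nlinarith [sq_nonneg (((2:ℚ)^(n-1) * 2)⁻¹)]

lemma R_nonneg (n : ℕ) : 0 ≤ ∏ j ∈ Finset.Icc 2 n, (1 - x j)⁻¹ := by
  apply Finset.prod_nonneg
  intro j _
  exact inv_nonneg.2 (by linarith [x_le_one j])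

lemma R_le (n : ℕ) : ∏ j ∈ Finset.Icc 2 n, (1 - x j)⁻¹ ≤ 512/147 := by
  rcases Nat.lt_or_ge n 4 with h | h
  · interval_cases n
    · rw [Finset.Icc_eq_empty (by omega), Finset.prod_empty]; norm_num
    · rw [Finset.Icc_eq_empty (by omega), Finset.prod_empty]; norm_num
    · rw [show Finset.Icc 2 2 = {2} from rfl, Finset.prod_singleton]; norm_num [x]
    · rw [show Finset.Icc 2 3 = {2, 3} from by decide]
      norm_num [x, Finset.prod_insert, Finset.mem_insert]
  · calc ∏ j ∈ Finset.Icc 2 n, (1 - x j)⁻¹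
        ≤ (512/147) * (1 - ((2:ℚ)^(n-1))⁻¹) := R_bound n h
    _ ≤ 512/147 := by
        have : (0:ℚ) < (2:ℚ)^(n-1) := by positivity
        nlinarith [inv_nonneg.2 (le_of_lt this)]

/-- `σ j = (1 - x j)⁻²`; bound for the full product -/
lemma Q_le (n : ℕ) : ∏ j ∈ Finset.Icc 2 n, ((1 - x j)⁻¹)^2 ≤ (512/147)^2 := by
  rw [Finset.prod_pow]
  exact pow_le_pow_left₀ (R_nonneg n) (R_le n) 2


lemma weight_cast (hm : 1 ≤ m) (P : Nat.Partition m) :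
    ((2 ^ (Multiset.card P.parts) * ∏ j ∈ Finset.Icc 1 m, (P.parts.count j + 1) : ℕ) : ℚ)
    = 2^m * (((P.parts.count 1 : ℚ) + 1) *
        ∏ j ∈ Finset.Icc 2 m, (((P.parts.count j : ℚ) + 1) * x j ^ (P.parts.count j))) := by
  have hx : ∏ j ∈ Finset.Icc 2 m, x j ^ (P.parts.count j)
      = ((2:ℚ) ^ (∑ j ∈ Finset.Icc 2 m, (j-1) * P.parts.count j))⁻¹ := by
    rw [← Finset.prod_pow_eq_pow_sum, ← Finset.prod_inv_distrib]
    apply Finset.prod_congr rfl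
    intro j _
    rw [x, inv_pow, pow_mul]
  have hm2 : (2:ℚ)^m = 2^(Multiset.card P.parts)
      * 2^(∑ j ∈ Finset.Icc 2 m, (j-1) * P.parts.count j) := by
    rw [← pow_add]
    exact congrArg (fun e => (2:ℚ)^e) (m_eq hm P)
  have key : (2:ℚ)^m * ∏ j ∈ Finset.Icc 2 m, x j ^ (P.parts.count j)
      = 2 ^ (Multiset.card P.parts) := by
    rw [hx, hm2, mul_assoc, mul_inv_cancel₀ (by positivity), mul_one]
  push_cast
  rw [Icc_insert hm, Finset.prod_insert (by simp), Finset.prod_mul_distrib, ← key]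
  ring

lemma prod_fin_eq (h : ℕ → ℚ) (h01 : ∀ j, j < 2 → h j = 1) :
    ∏ j : Fin (m+1), h (j:ℕ) = ∏ j ∈ Finset.Icc 2 m, h j := by
  rw [Fin.prod_univ_eq_prod_range (fun j => h j) (m+1)]
  apply (Finset.prod_subset (fun j hj => ?_) (fun j hj hj2 => ?_)).symm
  · rw [Finset.mem_Icc] at hj; rw [Finset.mem_range]; omega
  · apply h01
    rw [Finset.mem_range] at hj
    rw [Finset.mem_Icc] at hj2
    omega

lemma count_triv_one : (triv m).parts.count 1 = m := by
  simp [triv, Multiset.count_replicate]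

lemma count_triv {j : ℕ} (hj : j ≠ 1) : (triv m).parts.count j = 0 := by
  simp [triv, Multiset.count_replicate, hj, Ne.symm hj]

lemma eq_triv (P : Nat.Partition m) (h : ∀ j, 2 ≤ j → j ≤ m → P.parts.count j = 0) :
    P = triv m := by
  have hall : ∀ b ∈ P.parts, b = 1 := by
    intro b hb
    have h1 := P.parts_pos hb
    have h2 : b ≤ m := (Finset.mem_Icc.1 (mem_Icc_of_mem_parts P hb)).2
    by_contra hne
    have := h b (by omega) h2
    rw [Multiset.count_eq_zero] at this
    exact this hb
  have hrep := Multiset.eq_replicate_of_mem hall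
  have hcard : Multiset.card P.parts = m := by
    have hs := P.parts_sum
    conv_lhs at hs => rw [hrep]
    simpa using hs
  apply Nat.Partition.ext
  rw [hrep, hcard]
  rfl

lemma counts_inj (hm : 1 ≤ m) (P Q : Nat.Partition m)
    (h : ∀ j, 2 ≤ j → j ≤ m → P.parts.count j = Q.parts.count j) : P = Q := by
  have hs : ∑ j ∈ Finset.Icc 2 m, j * P.parts.count j
      = ∑ j ∈ Finset.Icc 2 m, j * Q.parts.count j :=
    Finset.sum_congr rfl fun j hj => by
      rw [h j (Finset.mem_Icc.1 hj).1 (Finset.mem_Icc.1 hj).2]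
  have hP := sum_eq P
  have hQ := sum_eq Q
  rw [Icc_insert hm, Finset.sum_insert (by simp), one_mul] at hP hQ
  have h1 : P.parts.count 1 = Q.parts.count 1 := by omega
  apply Nat.Partition.ext
  apply Multiset.ext.2
  intro a
  by_cases ha1 : a = 1
  · subst ha1; exact h1
  · by_cases ha2 : 2 ≤ a ∧ a ≤ m
    · exact h a ha2.1 ha2.2
    · rw [count_eq_zero_of_not_Icc P (by rw [Finset.mem_Icc]; omega),
        count_eq_zero_of_not_Icc Q (by rw [Finset.mem_Icc]; omega)]


def vv (j k : ℕ) : ℚ := if 2 ≤ j then ((k:ℚ)+1) * x j ^ k else 1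

lemma vv_nonneg (j k : ℕ) : 0 ≤ vv j k := by
  rw [vv]
  split
  · have := x_nonneg j; positivity
  · norm_num

lemma vv_zero (j : ℕ) : vv j 0 = 1 := by
  rw [vv]; split <;> simp

def tt (m : ℕ) : Fin (m+1) → Finset ℕ :=
  fun j => if 2 ≤ (j:ℕ) then Finset.range (m+1) else {0}

def φf (m : ℕ) (P : Nat.Partition m) : Fin (m+1) → ℕ :=
  fun j => if 2 ≤ (j:ℕ) then P.parts.count (j:ℕ) else 0

lemma G'_nonneg (g : Fin (m+1) → ℕ) : 0 ≤ ∏ j : Fin (m+1), vv (j:ℕ) (g j) :=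
  Finset.prod_nonneg fun j _ => vv_nonneg _ _

lemma prod_fin_eq' (h : ℕ → ℚ) (h01 : ∀ j, j < 2 → h j = 1)
    (F : Fin (m+1) → ℚ) (hF : ∀ j, F j = h (j:ℕ)) :
    ∏ j : Fin (m+1), F j = ∏ j ∈ Finset.Icc 2 m, h j :=
  (Finset.prod_congr rfl fun j _ => hF j).trans (prod_fin_eq h h01)

lemma Gφ (P : Nat.Partition m) :
    ∏ j : Fin (m+1), vv (j:ℕ) (φf m P j)
      = ∏ j ∈ Finset.Icc 2 m, (((P.parts.count j : ℚ) + 1) * x j ^ (P.parts.count j)) := by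
  have h2 := prod_fin_eq' (m := m) (fun n => vv n (if 2 ≤ n then P.parts.count n else 0))
    (fun j hj => by rw [if_neg (by omega), vv_zero])
    (fun j => vv (j:ℕ) (φf m P j)) (fun j => rfl)
  rw [h2]
  apply Finset.prod_congr rfl
  intro j hj
  rw [Finset.mem_Icc] at hj
  rw [if_pos hj.1, vv, if_pos hj.1]

lemma card_le (hm : 1 ≤ m) (P : Nat.Partition m) : Multiset.card P.parts ≤ m :=
  Nat.le.intro (m_eq hm P).symm

lemma main_ub (hm : 1 ≤ m) :
    (Ntot m : ℚ) ≤ 2^m * ((m+1) + m * ((∏ j ∈ Finset.Icc 2 m, ((1 - x j)⁻¹)^2) - 1)) := by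
  classical
  set G' : (Fin (m+1) → ℕ) → ℚ := fun g => ∏ j : Fin (m+1), vv (j:ℕ) (g j) with hG'
  set Qm : ℚ := ∏ j ∈ Finset.Icc 2 m, ((1 - x j)⁻¹)^2 with hQm
  set f : Nat.Partition m → ℚ := fun P =>
    2^m * (((P.parts.count 1 : ℚ) + 1) *
      ∏ j ∈ Finset.Icc 2 m, (((P.parts.count j : ℚ) + 1) * x j ^ (P.parts.count j))) with hf
  -- cast
  have hcast : (Ntot m : ℚ) = ∑ P : Nat.Partition m, f P := by
    rw [Ntot, Nat.cast_sum]
    exact Finset.sum_congr rfl fun P _ => weight_cast hm P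
  -- split off the trivial partition
  have hsplit : ∑ P : Nat.Partition m, f P
      = (∑ P ∈ Finset.univ.erase (triv m), f P) + f (triv m) :=
    (Finset.sum_erase_add _ _ (Finset.mem_univ _)).symm
  have hftriv : f (triv m) = 2^m * (m+1) := by
    simp only [hf]
    rw [count_triv_one]
    rw [Finset.prod_eq_one (fun j hj => by
      rw [count_triv (by rw [Finset.mem_Icc] at hj; omega)]
      simp)]
    ring
  -- pointwise bound on non-trivial partitions
  have hpt : ∀ P ∈ Finset.univ.erase (triv m), f P ≤ 2^m * m * G' (φf m P) := by
    intro P hP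
    have hne : P ≠ triv m := (Finset.mem_erase.1 hP).1
    have hex : ∃ j, 2 ≤ j ∧ j ≤ m ∧ 1 ≤ P.parts.count j := by
      by_contra hcon
      push_neg at hcon
      exact hne (eq_triv P (fun j h2 h3 => by have := hcon j h2 h3; omega))
    have hc1 : P.parts.count 1 + 2 ≤ m := by
      obtain ⟨j, hj2, hjm, hjc⟩ := hex
      have hs := sum_eq P
      rw [Icc_insert hm, Finset.sum_insert (by simp), one_mul] at hs
      have hterm := Finset.single_le_sum (f := fun i => i * P.parts.count i)
        (fun i _ => Nat.zero_le _) (Finset.mem_Icc.2 ⟨hj2, hjm⟩)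
      have h22 : 2 ≤ j * P.parts.count j := le_trans (by omega) (Nat.mul_le_mul hj2 hjc)
      omega
    have hGnn : 0 ≤ ∏ j ∈ Finset.Icc 2 m,
        (((P.parts.count j : ℚ) + 1) * x j ^ (P.parts.count j)) :=
      Finset.prod_nonneg fun j _ => by have := x_nonneg j; positivity
    simp only [hf, hG']
    rw [Gφ P, mul_assoc ((2:ℚ)^m) (m:ℚ) _]
    apply mul_le_mul_of_nonneg_left _ (by positivity)
    apply mul_le_mul_of_nonneg_right _ hGnn
    have hcc : ((P.parts.count 1 : ℕ) : ℚ) + 2 ≤ (m:ℚ) := by exact_mod_cast hc1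
    linarith
  -- membership facts
  have hz_mem : (fun _ => 0 : Fin (m+1) → ℕ) ∈ Fintype.piFinset (tt m) := by
    rw [Fintype.mem_piFinset]
    intro j
    simp only [tt]
    split
    · rw [Finset.mem_range]; omega
    · exact Finset.mem_singleton_self 0
  have hG'z : G' (fun _ => 0) = 1 := by
    simp only [hG']
    exact Finset.prod_eq_one fun j _ => vv_zero _
  have hsub : (Finset.univ.erase (triv m)).image (φf m)
      ⊆ (Fintype.piFinset (tt m)).erase (fun _ => 0) := by
    intro g hg
    rw [Finset.mem_image] at hg
    obtain ⟨P, hP, rfl⟩ := hg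
    have hne : P ≠ triv m := (Finset.mem_erase.1 hP).1
    rw [Finset.mem_erase]
    constructor
    · intro hzz
      apply hne
      apply eq_triv P
      intro j h2 h3
      have hcf := congrFun hzz (⟨j, by omega⟩ : Fin (m+1))
      simpa only [φf, if_pos (show 2 ≤ j from h2)] using hcf
    · rw [Fintype.mem_piFinset]
      intro j
      simp only [φf, tt]
      split
      · rw [Finset.mem_range]
        exact lt_of_le_of_lt (le_trans (Multiset.count_le_card _ _) (card_le hm P))
          (Nat.lt_succ_self m)
      · exact Finset.mem_singleton_self 0
  have hinj : ∀ P ∈ Finset.univ.erase (triv m), ∀ Q ∈ Finset.univ.erase (triv m),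
      φf m P = φf m Q → P = Q := by
    intro P _ Q _ hPQ
    apply counts_inj hm
    intro j h2 h3
    have hcf := congrFun hPQ (⟨j, by omega⟩ : Fin (m+1))
    simpa only [φf, if_pos (show 2 ≤ j from h2)] using hcf
  -- sum over the pi-set
  have hpi : ∑ g ∈ Fintype.piFinset (tt m), G' g ≤ Qm := by
    rw [hG', ← Finset.prod_univ_sum]
    have h2 := prod_fin_eq' (m := m)
      (fun n => ∑ k ∈ (if 2 ≤ n then Finset.range (m+1) else {0}), vv n k)
      (fun j hj => by rw [if_neg (by omega), Finset.sum_singleton, vv_zero])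
      (fun j => ∑ k ∈ tt m j, vv (j:ℕ) k) (fun j => rfl)
    rw [h2]
    apply Finset.prod_le_prod
    · intro j _
      exact Finset.sum_nonneg fun k _ => vv_nonneg _ _
    · intro j hj
      rw [Finset.mem_Icc] at hj
      rw [if_pos hj.1]
      calc ∑ k ∈ Finset.range (m+1), vv j k
          = ∑ k ∈ Finset.range (m+1), ((k:ℚ)+1) * x j ^ k :=
            Finset.sum_congr rfl fun k _ => by rw [vv, if_pos hj.1]
        _ ≤ ((1 - x j)⁻¹)^2 := geom_le _ _ (x_nonneg j) (x_le_half hj.1)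
  have himg : ∑ P ∈ Finset.univ.erase (triv m), G' (φf m P) ≤ Qm - 1 := by
    rw [← Finset.sum_image hinj]
    have h2 : ∑ g ∈ (Finset.univ.erase (triv m)).image (φf m), G' g
        ≤ ∑ g ∈ (Fintype.piFinset (tt m)).erase (fun _ => 0), G' g :=
      Finset.sum_le_sum_of_subset_of_nonneg hsub (fun g _ _ => G'_nonneg g)
    have h3 := Finset.sum_erase_add (Fintype.piFinset (tt m)) G' hz_mem
    rw [hG'z] at h3
    linarith
  calc (Ntot m : ℚ) = (∑ P ∈ Finset.univ.erase (triv m), f P) + f (triv m) := by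
        rw [hcast, hsplit]
    _ ≤ (∑ P ∈ Finset.univ.erase (triv m), 2^m * m * G' (φf m P)) + 2^m * (m+1) := by
        rw [hftriv]
        exact add_le_add_left (Finset.sum_le_sum hpt) _
    _ = 2^m * m * (∑ P ∈ Finset.univ.erase (triv m), G' (φf m P)) + 2^m * (m+1) := by
        rw [Finset.mul_sum]
    _ ≤ 2^m * m * (Qm - 1) + 2^m * (m+1) := by
        apply add_le_add_left
        apply mul_le_mul_of_nonneg_left himg (by positivity)
    _ = 2^m * ((m+1) + m * (Qm - 1)) := by ring


lemma weight_triv (hm : 1 ≤ m) :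
    2 ^ (Multiset.card (triv m).parts) *
      ∏ j ∈ Finset.Icc 1 m, (Multiset.count j (triv m).parts + 1) = 2^m * (m+1) := by
  have hcard : Multiset.card (triv m).parts = m := by simp [triv]
  have hprod : ∏ j ∈ Finset.Icc 1 m, (Multiset.count j (triv m).parts + 1) = m + 1 := by
    rw [Finset.prod_eq_single 1
      (fun b _ hb => by simp [count_triv hb])
      (fun h => absurd (Finset.mem_Icc.2 ⟨le_refl 1, hm⟩) h)]
    rw [count_triv_one]
  rw [hcard, hprod]

end NtotAux

theorem Ntot_bounds (m : ℕ) (hm : 1 ≤ m) :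
    m * 2 ^ m ≤ Ntot m ∧ Ntot m ≤ 13 * m * 2 ^ m := by
  constructor
  · -- lower bound
    calc m * 2 ^ m ≤ 2^m * (m+1) := by nlinarith [Nat.one_le_two_pow (n := m)]
      _ = 2 ^ (Multiset.card (NtotAux.triv m).parts) *
          ∏ j ∈ Finset.Icc 1 m, (Multiset.count j (NtotAux.triv m).parts + 1) :=
            (NtotAux.weight_triv hm).symm
      _ ≤ Ntot m := by
          rw [Ntot]
          exact Finset.single_le_sum (f := fun P : Nat.Partition m =>
            2 ^ (Multiset.card P.parts) * ∏ j ∈ Finset.Icc 1 m, (Multiset.count j P.parts + 1))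
            (fun P _ => Nat.zero_le _) (Finset.mem_univ (NtotAux.triv m))
  · -- upper bound
    have hub := NtotAux.main_ub hm
    have hQ := NtotAux.Q_le m
    rw [← @Nat.cast_le ℚ]
    push_cast
    rcases eq_or_lt_of_le hm with h1 | h2
    · -- m = 1
      subst h1
      rw [Finset.Icc_eq_empty (by norm_num), Finset.prod_empty] at hub
      norm_num at hub ⊢
      linarith
    · -- 2 ≤ m
      have hm2 : (2:ℚ) ≤ (m:ℚ) := by exact_mod_cast h2
      have hmq : (0:ℚ) ≤ (m:ℚ) := by positivity
      calc (Ntot m : ℚ)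
          ≤ 2^m * ((m+1) + m * ((∏ j ∈ Finset.Icc 2 m, ((1 - NtotAux.x j)⁻¹)^2) - 1)) := hub
        _ ≤ 2^m * ((m+1) + m * ((512/147:ℚ)^2 - 1)) := by
            apply mul_le_mul_of_nonneg_left _ (by positivity)
            apply add_le_add_right
            apply mul_le_mul_of_nonneg_left (sub_le_sub_right hQ 1) hmq
        _ ≤ 2^m * (13 * m) := by
            apply mul_le_mul_of_nonneg_left _ (by positivity)
            nlinarith
        _ = 13 * m * 2^m := by ring
end

section
/- Let m ≥ 2 and p ≥ 2 be integers. There exist matrices W ∈ ℝ^{2p×p} and V ∈ ℝ^{p×2p} such that, for every x ∈ X_m, the two-layer sine network scores s(x) = V·sin(Wx) satisfy s_q(x) = p if q = y(x) and s_q(x) = 0 otherwise; hence the unique-argmax predictor outputs y(x) with margin exactly p on every input. Moreover every entry of W has absolute value at most π (so ‖W‖_F ≤ π√2·p), every entry of V has absolute value at most 1, and V·Vᵀ = p·I_p (so ‖V‖₂ = √p). -/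
open Matrix

open Real Finset in
/-- Sum of cosines of `p`-th roots-of-unity angles. -/
lemma aux_sum_cos_key (p : ℕ) (hp : 0 < p) (n : ℤ) :
    ∑ k ∈ Finset.range p, Real.cos (2 * π / p * k * n) =
      if (p:ℤ) ∣ n then (p:ℝ) else 0 := by
  have hp0 : (p:ℝ) ≠ 0 := Nat.cast_ne_zero.mpr hp.ne'
  have hpC : (p:ℂ) ≠ 0 := Nat.cast_ne_zero.mpr hp.ne'
  set z : ℂ := Complex.exp ((2 * π * n / p : ℝ) * Complex.I) with hz
  have hterm : ∀ k : ℕ, Real.cos (2 * π / p * k * n) = (z ^ k).re := by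
    intro k
    rw [hz, ← Complex.exp_nat_mul]
    have : (k:ℂ) * (((2 * π * n / p : ℝ)) * Complex.I) =
        ((2 * π / p * k * n : ℝ) : ℂ) * Complex.I := by
      push_cast; ring
    rw [this, Complex.exp_ofReal_mul_I_re]
  have hsum : ∑ k ∈ Finset.range p, Real.cos (2 * π / p * k * n) =
      (∑ k ∈ Finset.range p, z ^ k).re := by
    rw [Complex.re_sum]
    exact Finset.sum_congr rfl fun k _ => hterm k
  by_cases hdvd : (p:ℤ) ∣ n
  · rw [if_pos hdvd]
    obtain ⟨c, hc⟩ := hdvd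
    have hz1 : z = 1 := by
      rw [hz]
      have : ((2 * π * n / p : ℝ) : ℂ) * Complex.I = (c:ℤ) * (2 * π * Complex.I) := by
        push_cast [hc]
        field_simp
      rw [this]
      exact Complex.exp_int_mul_two_pi_mul_I c
    simp [hsum, hz1]
  · rw [if_neg hdvd]
    have hz1 : z ≠ 1 := by
      intro h
      rw [hz, Complex.exp_eq_one_iff] at h
      obtain ⟨k, hk⟩ := h
      have hk' : ((2 * π * n / p : ℝ) : ℂ) * Complex.I
          = ((k * (2 * π) : ℝ) : ℂ) * Complex.I := by
        rw [hk]; push_cast; ring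
      have hre : (2 * π * n / p : ℝ) = k * (2 * π) := by
        have := mul_right_cancel₀ Complex.I_ne_zero hk'
        exact_mod_cast this
      have hpi : (π:ℝ) ≠ 0 := Real.pi_ne_zero
      have : (n:ℝ) = (k:ℝ) * p := by
        have h2π : (2*π:ℝ) ≠ 0 := by positivity
        field_simp at hre
        have h2 : (2*π)*(n:ℝ) = (2*π)*((k:ℝ)*p) := by linear_combination (2*π) * hre
        exact mul_left_cancel₀ h2π h2
      have : n = k * p := by exact_mod_cast this
      exact hdvd ⟨k, by linarith⟩
    have hzp : z ^ p = 1 := by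
      rw [hz, ← Complex.exp_nat_mul]
      have : (p:ℂ) * (((2 * π * n / p : ℝ)) * Complex.I) = (n:ℤ) * (2 * π * Complex.I) := by
        push_cast; field_simp
      rw [this]
      exact Complex.exp_int_mul_two_pi_mul_I n
    have h0 : ∑ k ∈ Finset.range p, z ^ k = 0 := by
      rw [geom_sum_eq hz1, hzp]
      simp
    simp [hsum, h0]

/-- Reduce a real number modulo `2π` into `[-π, π]`. -/
noncomputable def redc (t : ℝ) : ℝ := t - 2 * Real.pi * (round (t / (2 * Real.pi)) : ℤ)

open Real in
lemma aux_redc_abs_le (t : ℝ) : |redc t| ≤ π := by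
  have h2π : (0:ℝ) < 2 * π := by positivity
  have h : redc t = (2 * π) * (t / (2 * π) - (round (t / (2 * π)) : ℤ)) := by
    rw [redc]; field_simp
  rw [h, abs_mul, abs_of_pos h2π]
  have hr := abs_sub_round (t / (2 * π))
  calc 2 * π * |t / (2 * π) - (round (t / (2 * π)) : ℤ)|
      ≤ 2 * π * (1/2) := by
        exact mul_le_mul_of_nonneg_left hr h2π.le
    _ = π := by ring

open Real in
lemma aux_sin_redc_sum {P : ℕ} (θ : Fin P → ℝ) (x : Fin P → ℕ) :
    Real.sin (∑ r, redc (θ r) * (x r : ℝ)) = Real.sin (∑ r, θ r * (x r : ℝ)) := by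
  set K : ℤ := ∑ r, (round (θ r / (2 * π)) : ℤ) * (x r : ℤ) with hK
  have h : ∑ r, redc (θ r) * (x r : ℝ)
      = (∑ r, θ r * (x r : ℝ)) - (K : ℝ) * (2 * π) := by
    rw [hK]
    push_cast
    rw [Finset.sum_mul, ← Finset.sum_sub_distrib]
    exact Finset.sum_congr rfl fun r _ => by rw [redc]; ring
  rw [h, Real.sin_sub_int_mul_two_pi]

lemma aux_int_dvd_sub_iff (p a b : ℕ) (hb : b < p) :
    ((p:ℤ) ∣ (a:ℤ) - (b:ℤ)) ↔ b = a % p := by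
  rw [← Nat.modEq_iff_dvd, Nat.ModEq, Nat.mod_eq_of_lt hb]

open Finset in
lemma aux_sum_split {M : Type*} [AddCommMonoid M] {p : ℕ} (f : Fin (2*p) → M) :
    ∑ j, f j = (∑ i : Fin p, f (Fin.cast (two_mul p).symm (Fin.castAdd p i)))
      + ∑ i : Fin p, f (Fin.cast (two_mul p).symm (Fin.natAdd p i)) := by
  have h : p + p = 2 * p := (two_mul p).symm
  have := Fintype.sum_equiv (finCongr h) (fun i => f (finCongr h i)) f (fun i => rfl)
  rw [← this, Fin.sum_univ_add]
  rfl

open Real Finset in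
theorem sine_high_margin_construction (m p : ℕ) (hm : 2 ≤ m) (hp : 2 ≤ p) :
    ∃ (W : Fin (2 * p) → Fin p → ℝ) (V : Fin p → Fin (2 * p) → ℝ),
      (∀ x : Fin p → ℕ, (∑ r, x r) = m →
        ∃ ℓ : Fin p, (ℓ : ℕ) = lab p x ∧
          sineScore W V x ℓ = p ∧
          ∀ q : Fin p, q ≠ ℓ → sineScore W V x q = 0) ∧
      (∀ j r, |W j r| ≤ Real.pi) ∧
      Real.sqrt (∑ j, ∑ r, (W j r) ^ 2) ≤ Real.pi * Real.sqrt 2 * p ∧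
      (∀ q j, |V q j| ≤ 1) ∧
      (Matrix.of V) * (Matrix.of V)ᵀ = (p : ℝ) • 1 := by
  have hp0 : 0 < p := by omega
  have hpR : (0:ℝ) < p := by exact_mod_cast hp0
  have hmR : (m:ℝ) ≠ 0 := by positivity
  set ω : ℝ := 2 * π / p with hω
  set W : Fin (2 * p) → Fin p → ℝ := fun j r =>
    if (j:ℕ) < p then redc (ω * j * r)
    else redc (ω * (((j:ℕ) - p : ℕ) : ℝ) * r + π / (2 * m)) with hW
  set V : Fin p → Fin (2 * p) → ℝ := fun q j =>
    if (j:ℕ) < p then Real.sin (ω * j * q)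
    else Real.cos (ω * (((j:ℕ) - p : ℕ) : ℝ) * q) with hV
  -- index coercion facts
  have hL : ∀ i : Fin p, ((Fin.cast (two_mul p).symm (Fin.castAdd p i) : Fin (2*p)) : ℕ) = i :=
    fun i => rfl
  have hR : ∀ i : Fin p, ((Fin.cast (two_mul p).symm (Fin.natAdd p i) : Fin (2*p)) : ℕ) = p + i :=
    fun i => rfl
  -- generic score formula
  have hscore : ∀ (x : Fin p → ℕ), (∑ r, x r) = m → ∀ q : Fin p,
      sineScore W V x q =
        if (p:ℤ) ∣ ((∑ r : Fin p, (r:ℕ) * x r : ℕ) : ℤ) - (q:ℤ) then (p:ℝ) else 0 := by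
    intro x hx q
    set N : ℕ := ∑ r : Fin p, (r:ℕ) * x r with hN
    have hNR : (N:ℝ) = ∑ r : Fin p, (r:ℝ) * (x r : ℝ) := by rw [hN]; push_cast; rfl
    have hsum_lin : ∀ k : ℕ, ∑ r : Fin p, (ω * k * r) * (x r : ℝ) = ω * k * N := by
      intro k
      rw [hNR, Finset.mul_sum]
      exact Finset.sum_congr rfl fun r _ => by ring
    have hxR : ∑ r : Fin p, (x r : ℝ) = (m:ℝ) := by exact_mod_cast congrArg (Nat.cast : ℕ → ℝ) hx
    have hsinL : ∀ k : ℕ, Real.sin (∑ r : Fin p, redc (ω * k * r) * (x r:ℝ)) = Real.sin (ω * k * (N:ℝ)) := by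
      intro k
      rw [aux_sin_redc_sum (fun r : Fin p => ω * k * r) x, hsum_lin]
    have hsinR : ∀ k : ℕ,
        Real.sin (∑ r : Fin p, redc (ω * k * r + π / (2*m)) * (x r:ℝ)) = Real.cos (ω * k * (N:ℝ)) := by
      intro k
      rw [aux_sin_redc_sum (fun r : Fin p => ω * k * r + π / (2*m)) x]
      have h1 : ∑ r : Fin p, (ω * k * r + π / (2*m)) * (x r : ℝ)
          = ω * k * N + π / 2 := by
        have : ∑ r : Fin p, (ω * k * r + π / (2*m)) * (x r : ℝ)
            = (∑ r : Fin p, (ω * k * r) * (x r : ℝ))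
              + (π / (2*m)) * ∑ r : Fin p, (x r : ℝ) := by
          rw [Finset.mul_sum, ← Finset.sum_add_distrib]
          exact Finset.sum_congr rfl fun r _ => by ring
        rw [this, hsum_lin, hxR]
        field_simp
      rw [h1, Real.sin_add_pi_div_two]
    -- expand the score
    rw [show sineScore W V x q
      = ∑ j, V q j * Real.sin (∑ r, W j r * (x r : ℝ)) from rfl, aux_sum_split]
    have hLsum : ∀ i : Fin p,
        V q (Fin.cast (two_mul p).symm (Fin.castAdd p i))
          * Real.sin (∑ r, W (Fin.cast (two_mul p).symm (Fin.castAdd p i)) r * (x r : ℝ))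
        = Real.sin (ω * i * q) * Real.sin (ω * i * N) := by
      intro i
      have hi : ((Fin.cast (two_mul p).symm (Fin.castAdd p i) : Fin (2*p)) : ℕ) < p := by
        rw [hL]; exact i.isLt
      simp only [hV, hW, hL, if_pos hi, hL i]
      rw [hsinL i]
    have hRsum : ∀ i : Fin p,
        V q (Fin.cast (two_mul p).symm (Fin.natAdd p i))
          * Real.sin (∑ r, W (Fin.cast (two_mul p).symm (Fin.natAdd p i)) r * (x r : ℝ))
        = Real.cos (ω * i * q) * Real.cos (ω * i * N) := by
      intro i
      have hi : ¬ ((Fin.cast (two_mul p).symm (Fin.natAdd p i) : Fin (2*p)) : ℕ) < p := by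
        rw [hR]; omega
      have hsub : ((Fin.cast (two_mul p).symm (Fin.natAdd p i) : Fin (2*p)) : ℕ) - p = i := by
        rw [hR]; omega
      simp only [hV, hW, if_neg hi, hsub]
      rw [hsinR i]
    rw [Finset.sum_congr rfl (fun i _ => hLsum i), Finset.sum_congr rfl (fun i _ => hRsum i),
      ← Finset.sum_add_distrib]
    have hcos : ∀ i : Fin p,
        Real.sin (ω * i * q) * Real.sin (ω * i * N) + Real.cos (ω * i * q) * Real.cos (ω * i * N)
        = Real.cos (2 * π / p * i * (((N:ℤ) - (q:ℤ) : ℤ) : ℝ)) := by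
      intro i
      rw [add_comm, ← Real.cos_sub, ← Real.cos_neg]
      congr 1
      push_cast [hω]
      ring
    rw [Finset.sum_congr rfl (fun i _ => hcos i)]
    rw [Fin.sum_univ_eq_sum_range (fun i => Real.cos (2 * π / p * i * (((N:ℤ) - (q:ℤ) : ℤ) : ℝ)))]
    exact aux_sum_cos_key p hp0 ((N:ℤ) - (q:ℤ))
  refine ⟨W, V, ?_, ?_, ?_, ?_, ?_⟩
  · -- correctness
    intro x hx
    set N : ℕ := ∑ r : Fin p, (r:ℕ) * x r with hN
    refine ⟨⟨N % p, Nat.mod_lt N hp0⟩, rfl, ?_, ?_⟩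
    · rw [hscore x hx]
      rw [if_pos ((aux_int_dvd_sub_iff p N (N % p) (Nat.mod_lt N hp0)).mpr rfl)]
    · intro q hq
      rw [hscore x hx]
      rw [if_neg]
      intro hdvd
      exact hq (Fin.ext ((aux_int_dvd_sub_iff p N q q.isLt).mp hdvd))
  · -- entrywise bound on W
    intro j r
    rw [hW]
    dsimp only
    split <;> exact aux_redc_abs_le _
  · -- Frobenius bound
    have hbound : ∑ j, ∑ r, (W j r) ^ 2 ≤ (π * Real.sqrt 2 * p) ^ 2 := by
      have h1 : ∀ j r, (W j r) ^ 2 ≤ π ^ 2 := by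
        intro j r
        have habs : |W j r| ≤ π := by
          rw [hW]; dsimp only; split <;> exact aux_redc_abs_le _
        calc (W j r)^2 = |W j r|^2 := (sq_abs _).symm
          _ ≤ π^2 := pow_le_pow_left₀ (abs_nonneg _) habs 2
      calc ∑ j, ∑ r, (W j r) ^ 2 ≤ ∑ _j : Fin (2*p), ∑ _r : Fin p, π ^ 2 := by
            apply Finset.sum_le_sum; intro j _
            apply Finset.sum_le_sum; intro r _
            exact h1 j r
        _ = (2*p : ℕ) * ((p:ℕ) * π^2) := by
            simp [Finset.sum_const, Finset.card_univ]
        _ = (π * Real.sqrt 2 * p) ^ 2 := by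
            have h2 : Real.sqrt 2 ^ 2 = 2 := Real.sq_sqrt (by norm_num)
            push_cast
            nlinarith [h2, Real.pi_pos, hpR]
    calc Real.sqrt (∑ j, ∑ r, (W j r) ^ 2) ≤ Real.sqrt ((π * Real.sqrt 2 * p) ^ 2) :=
          Real.sqrt_le_sqrt hbound
      _ = π * Real.sqrt 2 * p := by
          rw [Real.sqrt_sq (by positivity)]
  · -- entrywise bound on V
    intro q j
    rw [hV]
    dsimp only
    split
    · exact Real.abs_sin_le_one _
    · exact Real.abs_cos_le_one _
  · -- V Vᵀ = p • 1
    ext q q'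
    rw [Matrix.mul_apply]
    simp only [Matrix.transpose_apply, Matrix.of_apply]
    have : ∑ j, V q j * V q' j =
        if (p:ℤ) ∣ ((q':ℤ) - (q:ℤ)) then (p:ℝ) else 0 := by
      rw [aux_sum_split (fun j => V q j * V q' j)]
      have hLsum : ∀ i : Fin p,
          V q (Fin.cast (two_mul p).symm (Fin.castAdd p i))
            * V q' (Fin.cast (two_mul p).symm (Fin.castAdd p i))
          = Real.sin (ω * i * q) * Real.sin (ω * i * q') := by
        intro i
        have hi : ((Fin.cast (two_mul p).symm (Fin.castAdd p i) : Fin (2*p)) : ℕ) < p := by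
          rw [hL]; exact i.isLt
        simp only [hV, if_pos hi, hL i]
      have hRsum : ∀ i : Fin p,
          V q (Fin.cast (two_mul p).symm (Fin.natAdd p i))
            * V q' (Fin.cast (two_mul p).symm (Fin.natAdd p i))
          = Real.cos (ω * i * q) * Real.cos (ω * i * q') := by
        intro i
        have hi : ¬ ((Fin.cast (two_mul p).symm (Fin.natAdd p i) : Fin (2*p)) : ℕ) < p := by
          rw [hR]; omega
        have hsub : ((Fin.cast (two_mul p).symm (Fin.natAdd p i) : Fin (2*p)) : ℕ) - p = i := by
          rw [hR]; omega
        simp only [hV, if_neg hi, hsub]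
      rw [Finset.sum_congr rfl (fun i _ => hLsum i), Finset.sum_congr rfl (fun i _ => hRsum i),
        ← Finset.sum_add_distrib]
      have hcos : ∀ i : Fin p,
          Real.sin (ω * i * q) * Real.sin (ω * i * q')
            + Real.cos (ω * i * q) * Real.cos (ω * i * q')
          = Real.cos (2 * π / p * i * ((((q':ℤ) - (q:ℤ)) : ℤ) : ℝ)) := by
        intro i
        rw [add_comm, ← Real.cos_sub, ← Real.cos_neg]
        congr 1
        push_cast [hω]
        ring
      rw [Finset.sum_congr rfl (fun i _ => hcos i)]
      rw [Fin.sum_univ_eq_sum_range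
        (fun i => Real.cos (2 * π / p * i * ((((q':ℤ) - (q:ℤ)) : ℤ) : ℝ)))]
      exact aux_sum_cos_key p hp0 ((q':ℤ) - (q:ℤ))
    rw [this]
    have hiff : ((p:ℤ) ∣ ((q':ℤ) - (q:ℤ))) ↔ q = q' := by
      rw [aux_int_dvd_sub_iff p q' q q.isLt, Nat.mod_eq_of_lt q'.isLt]
      exact ⟨fun h => Fin.ext h, fun h => by rw [h]⟩
    simp only [Matrix.smul_apply, Matrix.one_apply, smul_eq_mul]
    by_cases hqq : q = q'
    · rw [if_pos (hiff.mpr hqq), if_pos hqq]; simp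
    · rw [if_neg (fun h => hqq (hiff.mp h)), if_neg hqq]; simp
end
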